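/- arXiv:2507.20874 — 4 statements merged into one kernel-verified Lean document; each statement's English description precedes it below -/
import Mathlib

section
/- Let Ω = ω × (-1/2, 1/2) where ω ⊂ ℝ^{d-1} is a bounded smooth domain, and let h ∈ L²(ω) and v ∈ H¹(Ω). For 0 < ε ≤ 1 define the scaled gradient ∇^ε v = (∂₁v, ..., ∂_{d-1}v, ε^{-1}∂_d v), and define m(v)(x') = ∫_{-1/2}^{1/2} v(x', x_d) dx_d. Then for any z ∈ [-1/2, 1/2], one has |∫_ω (v(·,z) - m(v)) h| ≤ ε ‖h‖_{L²(ω)} ‖∇^ε v‖_{L²(Ω)}. -/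
open MeasureTheory Real

noncomputable section

/-- Partial derivative of `f` in the coordinate direction `i`. -/
def pd {n : ℕ} (f : (Fin n → ℝ) → ℝ) (i : Fin n) (x : Fin n → ℝ) : ℝ :=
  fderiv ℝ f x (Pi.single i 1)

/-- The plate-type domain `ω × (-1/2, 1/2)`. -/
def cyl {d : ℕ} (ω : Set (Fin d → ℝ)) : Set (Fin (d + 1) → ℝ) :=
  {x | (fun i : Fin d => x i.castSucc) ∈ ω ∧ x (Fin.last d) ∈ Set.Ioo (-(1:ℝ)/2) (1/2)}

/-- The open unit cube `(0,1)^d`. -/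
def unitCube (d : ℕ) : Set (Fin d → ℝ) := Set.univ.pi fun _ => Set.Ioo (0:ℝ) 1

/-- The periodicity cell `𝒴 = (0,1)^d × (-1/2,1/2)`. -/
def cellY (d : ℕ) : Set (Fin (d + 1) → ℝ) := cyl (unitCube d)

/-- `f` is 1-periodic in each of the first `d` (horizontal) variables. -/
def XPeriodic {d : ℕ} {β : Type*} (f : (Fin (d + 1) → ℝ) → β) : Prop :=
  ∀ (x : Fin (d + 1) → ℝ) (i : Fin d), f (x + Pi.single i.castSucc 1) = f x

/-- Squared pointwise norm of the scaled gradient `∇^ε v`. -/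
def gradEpsSq {d : ℕ} (ε : ℝ) (v : (Fin (d + 1) → ℝ) → ℝ) (x : Fin (d + 1) → ℝ) : ℝ :=
  (∑ α : Fin d, (pd v α.castSucc x) ^ 2) + ε⁻¹ ^ 2 * (pd v (Fin.last d) x) ^ 2

/-- Elementary Cauchy–Schwarz inequality for nonnegative functions. -/
lemma cs_aux {α : Type*} [MeasurableSpace α] {μ : Measure α} {f g : α → ℝ}
    (hfm : AEStronglyMeasurable f μ) (hgm : AEStronglyMeasurable g μ)
    (hf0 : ∀ x, 0 ≤ f x) (hg0 : ∀ x, 0 ≤ g x)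
    (hf : Integrable (fun x => f x ^ 2) μ) (hg : Integrable (fun x => g x ^ 2) μ) :
    Integrable (fun x => f x * g x) μ ∧
      ∫ x, f x * g x ∂μ ≤ Real.sqrt (∫ x, f x ^ 2 ∂μ) * Real.sqrt (∫ x, g x ^ 2 ∂μ) := by
  have hint : Integrable (fun x => f x * g x) μ := by
    refine (hf.add hg).mono' (hfm.mul hgm) (Filter.Eventually.of_forall fun x => ?_)
    simp only [Pi.add_apply]
    rw [Real.norm_eq_abs, abs_of_nonneg (mul_nonneg (hf0 x) (hg0 x))]
    nlinarith [sq_nonneg (f x - g x), hf0 x, hg0 x]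
  refine ⟨hint, ?_⟩
  set A := ∫ x, f x ^ 2 ∂μ with hA
  set B := ∫ x, g x ^ 2 ∂μ with hB
  have hA0 : 0 ≤ A := integral_nonneg fun x => sq_nonneg _
  have hB0 : 0 ≤ B := integral_nonneg fun x => sq_nonneg _
  rcases eq_or_lt_of_le hA0 with hA' | hA'
  · have hf_ae : (fun x => f x ^ 2) =ᵐ[μ] 0 :=
      (integral_eq_zero_iff_of_nonneg (fun x => sq_nonneg _) hf).mp hA'.symm
    have hz : (fun x => f x * g x) =ᵐ[μ] 0 := by
      filter_upwards [hf_ae] with x hx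
      have hfx : f x = 0 := by
        have : f x ^ 2 = 0 := hx
        exact pow_eq_zero_iff two_ne_zero |>.mp this
      simp [hfx]
    rw [integral_congr_ae hz]
    simp
    positivity
  rcases eq_or_lt_of_le hB0 with hB' | hB'
  · have hg_ae : (fun x => g x ^ 2) =ᵐ[μ] 0 :=
      (integral_eq_zero_iff_of_nonneg (fun x => sq_nonneg _) hg).mp hB'.symm
    have hz : (fun x => f x * g x) =ᵐ[μ] 0 := by
      filter_upwards [hg_ae] with x hx
      have hgx : g x = 0 := by
        have : g x ^ 2 = 0 := hx
        exact pow_eq_zero_iff two_ne_zero |>.mp this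
      simp [hgx]
    rw [integral_congr_ae hz]
    simp
    positivity
  · set t : ℝ := Real.sqrt B / Real.sqrt A with ht_def
    have hsA : 0 < Real.sqrt A := Real.sqrt_pos.mpr hA'
    have hsB : 0 < Real.sqrt B := Real.sqrt_pos.mpr hB'
    have ht : 0 < t := div_pos hsB hsA
    have hptwise : ∀ x, f x * g x ≤ (t * f x ^ 2 + t⁻¹ * g x ^ 2) / 2 := by
      intro x
      nlinarith [mul_nonneg (inv_nonneg.mpr ht.le) (sq_nonneg (t * f x - g x)),
        mul_inv_cancel₀ ht.ne']
    have hintR : Integrable (fun x => (t * f x ^ 2 + t⁻¹ * g x ^ 2) / 2) μ :=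
      ((hf.const_mul t).add (hg.const_mul t⁻¹)).div_const 2
    have h1 : ∫ x, f x * g x ∂μ ≤ ∫ x, (t * f x ^ 2 + t⁻¹ * g x ^ 2) / 2 ∂μ :=
      integral_mono hint hintR hptwise
    have h2 : ∫ x, (t * f x ^ 2 + t⁻¹ * g x ^ 2) / 2 ∂μ = (t * A + t⁻¹ * B) / 2 := by
      rw [integral_div, integral_add (hf.const_mul t) (hg.const_mul t⁻¹),
        integral_const_mul, integral_const_mul]
    have h3 : (t * A + t⁻¹ * B) / 2 = Real.sqrt A * Real.sqrt B := by
      have e1 : t * A = Real.sqrt A * Real.sqrt B := by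
        rw [ht_def, div_mul_eq_mul_div, mul_comm (Real.sqrt B) A, mul_div_right_comm,
          Real.div_sqrt]
      have e2 : t⁻¹ * B = Real.sqrt A * Real.sqrt B := by
        rw [ht_def, inv_div, div_mul_eq_mul_div, mul_comm (Real.sqrt A) B, mul_div_right_comm,
          Real.div_sqrt]
        ring
      rw [e1, e2]
      ring
    calc ∫ x, f x * g x ∂μ ≤ (t * A + t⁻¹ * B) / 2 := h2 ▸ h1
      _ = Real.sqrt A * Real.sqrt B := h3

/-- Poincaré–Wirtinger estimate in the thin direction:
`|∫_ω (v(·,z) - m(v)) h| ≤ ε ‖h‖_{L²(ω)} ‖∇^ε v‖_{L²(Ω)}`. -/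
theorem statement0
    (d : ℕ) (ω : Set (Fin d → ℝ))
    (hω_bdd : Bornology.IsBounded ω) (hω_meas : MeasurableSet ω)
    (ε : ℝ) (hε0 : 0 < ε) (hε1 : ε ≤ 1)
    (h : (Fin d → ℝ) → ℝ) (v : (Fin (d + 1) → ℝ) → ℝ)
    (hv : ContDiff ℝ 1 v)
    (hh : Integrable (fun x' => (h x') ^ 2) (volume.restrict ω))
    (hv2 : Integrable (fun x => (v x) ^ 2) (volume.restrict (cyl ω)))
    (hvg : Integrable (gradEpsSq ε v) (volume.restrict (cyl ω)))
    (z : ℝ) (hz : z ∈ Set.Icc (-(1:ℝ)/2) (1/2)) :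
    |∫ x' in ω,
        (v (Fin.snoc x' z) - ∫ t in Set.Ioo (-(1:ℝ)/2) (1/2), v (Fin.snoc x' t)) * h x'|
      ≤ ε * Real.sqrt (∫ x' in ω, (h x') ^ 2)
          * Real.sqrt (∫ x in cyl ω, gradEpsSq ε v x) := by
  classical
  set I : Set ℝ := Set.Ioo (-(1:ℝ)/2) (1/2) with hI_def
  have hI_meas : MeasurableSet I := measurableSet_Ioo
  have hIvol : volume I = 1 := by
    rw [hI_def, Real.volume_Ioo]; norm_num
  set D : (Fin (d+1) → ℝ) → ℝ := pd v (Fin.last d) with hD_def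
  have hvdiff : Differentiable ℝ v := hv.differentiable one_ne_zero
  have hDcont : Continuous D := by
    have h1 : Continuous (fderiv ℝ v) := hv.continuous_fderiv one_ne_zero
    exact h1.clm_apply continuous_const
  -- snoc as an affine map in the last variable
  have hsnoc_eq : ∀ (x' : Fin d → ℝ) (t : ℝ),
      (Fin.snoc x' t : Fin (d+1) → ℝ)
        = (Fin.snoc x' 0 : Fin (d+1) → ℝ) + t • (Pi.single (Fin.last d) 1 : Fin (d+1) → ℝ) := by
    intro x' t
    funext i
    refine Fin.lastCases ?_ (fun j => ?_) i
    · simp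
    · have hne : j.castSucc ≠ Fin.last d := (Fin.castSucc_lt_last j).ne
      simp [Pi.single_eq_of_ne hne]
  have hsnoc_cont : Continuous (fun p : ℝ × (Fin d → ℝ) => (Fin.snoc p.2 p.1 : Fin (d+1) → ℝ)) := by
    apply continuous_pi
    intro i
    refine Fin.lastCases ?_ (fun j => ?_) i
    · simpa using (continuous_fst : Continuous fun p : ℝ × (Fin d → ℝ) => p.1)
    · simp only [Fin.snoc_castSucc]
      exact (continuous_apply j).comp
        (continuous_snd : Continuous fun p : ℝ × (Fin d → ℝ) => p.2)
  have hsnoc_cont' : ∀ x' : Fin d → ℝ, Continuous (fun t : ℝ => (Fin.snoc x' t : Fin (d+1) → ℝ)) :=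
    fun x' => hsnoc_cont.comp (continuous_id.prodMk continuous_const)
  -- derivative of t ↦ v (snoc x' t)
  have hw_deriv : ∀ (x' : Fin d → ℝ) (s : ℝ),
      HasDerivAt (fun t => v (Fin.snoc x' t)) (D (Fin.snoc x' s)) s := by
    intro x' s
    have hc : HasDerivAt
        (fun t : ℝ => (Fin.snoc x' 0 : Fin (d+1) → ℝ) + t • (Pi.single (Fin.last d) 1 : Fin (d+1) → ℝ))
        ((Pi.single (Fin.last d) 1 : Fin (d+1) → ℝ)) s := by
      simpa using ((hasDerivAt_id s).smul_const (Pi.single (Fin.last d) (1:ℝ))).const_add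
        (Fin.snoc x' 0 : Fin (d+1) → ℝ)
    have hfun : (fun t : ℝ => (Fin.snoc x' t : Fin (d+1) → ℝ))
        = fun t : ℝ => (Fin.snoc x' 0 : Fin (d+1) → ℝ) + t • (Pi.single (Fin.last d) 1 : Fin (d+1) → ℝ) :=
      funext (hsnoc_eq x')
    have hc' : HasDerivAt (fun t : ℝ => (Fin.snoc x' t : Fin (d+1) → ℝ))
        ((Pi.single (Fin.last d) 1 : Fin (d+1) → ℝ)) s := hfun ▸ hc
    have := (hvdiff (Fin.snoc x' s)).hasFDerivAt.comp_hasDerivAt s hc'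
    exact this
  -- pointwise Poincaré bound in the thin variable
  have key : ∀ x' : Fin d → ℝ,
      |v (Fin.snoc x' z) - ∫ t in I, v (Fin.snoc x' t)|
        ≤ Real.sqrt (∫ t in I, D (Fin.snoc x' t) ^ 2) := by
    intro x'
    set w : ℝ → ℝ := fun t => v (Fin.snoc x' t) with hw_def
    set g : ℝ → ℝ := fun s => D (Fin.snoc x' s) with hg_def
    have hwcont : Continuous w := hv.continuous.comp (hsnoc_cont' x')
    have hgcont : Continuous g := hDcont.comp (hsnoc_cont' x')
    have hw_int : IntegrableOn w I :=
      (hwcont.integrableOn_Icc (a := -(1:ℝ)/2) (b := 1/2)).mono_set Set.Ioo_subset_Icc_self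
    have hconst_int : IntegrableOn (fun _ : ℝ => w z) I := by
      refine (integrableOn_const_iff (by simp)).2 (Or.inr ?_)
      rw [hIvol]; exact ENNReal.one_lt_top
    have hIone : ((volume I).toReal : ℝ) = 1 := by rw [hIvol]; simp
    have hstepA : w z - ∫ t in I, w t = ∫ t in I, (w z - w t) := by
      rw [integral_sub hconst_int hw_int, setIntegral_const]
      rw [measureReal_def, hIvol]; simp
    set C : ℝ := ∫ s in I, |g s| with hC_def
    have hgabs_int : IntegrableOn (fun s => |g s|) (Set.Ioc (-(1:ℝ)/2) (1/2)) :=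
      (hgcont.abs.integrableOn_Icc (a := -(1:ℝ)/2) (b := 1/2)).mono_set Set.Ioc_subset_Icc_self
    have hstepB : ∀ t ∈ Set.Icc (-(1:ℝ)/2) (1/2), |w z - w t| ≤ C := by
      intro t ht
      have hftc : ∫ s in t..z, g s = w z - w t := by
        refine intervalIntegral.integral_eq_sub_of_hasDerivAt (fun s _ => hw_deriv x' s) ?_
        exact hgcont.intervalIntegrable t z
      rw [← hftc]
      have h1 : |∫ s in t..z, g s| ≤ ∫ s in Set.uIoc t z, |g s| := by
        simpa [Real.norm_eq_abs] using intervalIntegral.norm_integral_le_integral_norm_uIoc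
          (f := g) (a := t) (b := z)
      have hsub : Set.uIoc t z ⊆ Set.Ioc (-(1:ℝ)/2) (1/2) := by
        rw [Set.uIoc]
        exact Set.Ioc_subset_Ioc (le_min ht.1 hz.1) (max_le ht.2 hz.2)
      have h2 : ∫ s in Set.uIoc t z, |g s| ≤ ∫ s in Set.Ioc (-(1:ℝ)/2) (1/2), |g s| := by
        refine setIntegral_mono_set hgabs_int ?_ (HasSubset.Subset.eventuallyLE hsub)
        exact Filter.Eventually.of_forall fun s => abs_nonneg _
      have h3 : ∫ s in Set.Ioc (-(1:ℝ)/2) (1/2), |g s| = C := by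
        rw [hC_def, hI_def, integral_Ioc_eq_integral_Ioo]
      linarith
    have hCle : C ≤ Real.sqrt (∫ s in I, g s ^ 2) := by
      have hgsq_int : IntegrableOn (fun s => |g s| ^ 2) I := by
        refine ((hgcont.abs.pow 2).integrableOn_Icc (a := -(1:ℝ)/2) (b := 1/2)).mono_set
          Set.Ioo_subset_Icc_self
      have hone_int : Integrable (fun _ : ℝ => (1:ℝ) ^ 2) (volume.restrict I) := by
        refine (integrableOn_const_iff (by simp)).2 (Or.inr ?_)
        rw [hIvol]; exact ENNReal.one_lt_top
      have := (cs_aux (μ := volume.restrict I) (f := fun s => |g s|) (g := fun _ => (1:ℝ))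
        (hgcont.abs.aestronglyMeasurable) aestronglyMeasurable_const
        (fun s => abs_nonneg _) (fun _ => zero_le_one) hgsq_int hone_int).2
      have h4 : ((volume I).toReal) = 1 := by rw [hIvol]; simp
      simpa [sq_abs, measureReal_def, h4] using this
    calc |w z - ∫ t in I, w t| = |∫ t in I, (w z - w t)| := by rw [hstepA]
      _ ≤ ∫ t in I, |w z - w t| := by
          simpa [Real.norm_eq_abs] using
            norm_integral_le_integral_norm (μ := volume.restrict I) (f := fun t => w z - w t)
      _ ≤ ∫ _ in I, C := by
          refine integral_mono_of_nonneg (Filter.Eventually.of_forall fun t => abs_nonneg _)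
            ((integrableOn_const_iff (by simp)).2 (Or.inr (by rw [hIvol]; exact ENNReal.one_lt_top))) ?_
          filter_upwards [ae_restrict_mem hI_meas] with t ht
          exact hstepB t (Set.Ioo_subset_Icc_self ht)
      _ = C := by rw [setIntegral_const, measureReal_def, hIvol]; simp
      _ ≤ Real.sqrt (∫ s in I, g s ^ 2) := hCle
  -- Fubini: ∫_ω G = ∫_{cyl ω} D²
  have hgrad_nonneg : ∀ x, 0 ≤ gradEpsSq ε v x := fun x =>
    add_nonneg (Finset.sum_nonneg fun _ _ => sq_nonneg _)
      (mul_nonneg (sq_nonneg _) (sq_nonneg _))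
  have hDbound : ∀ x, D x ^ 2 ≤ ε ^ 2 * gradEpsSq ε v x := by
    intro x
    have h1 : ε⁻¹ ^ 2 * D x ^ 2 ≤ gradEpsSq ε v x :=
      le_add_of_nonneg_left (Finset.sum_nonneg fun _ _ => sq_nonneg _)
    have h2 : D x ^ 2 = ε ^ 2 * (ε⁻¹ ^ 2 * D x ^ 2) := by
      field_simp
    rw [h2]
    exact mul_le_mul_of_nonneg_left h1 (sq_nonneg ε)
  have hD2cont : Continuous fun x => D x ^ 2 := hDcont.pow 2
  have hD2int : Integrable (fun x => D x ^ 2) (volume.restrict (cyl ω)) := by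
    refine (hvg.const_mul (ε ^ 2)).mono' hD2cont.aestronglyMeasurable
      (Filter.Eventually.of_forall fun x => ?_)
    rw [Real.norm_eq_abs, abs_of_nonneg (sq_nonneg _)]
    exact hDbound x
  set e := MeasurableEquiv.piFinSuccAbove (fun _ : Fin (d+1) => ℝ) (Fin.last d) with he_def
  have mp : MeasurePreserving e :=
    volume_preserving_piFinSuccAbove (fun _ : Fin (d+1) => ℝ) (Fin.last d)
  have he_symm : ∀ p : ℝ × (Fin d → ℝ), e.symm p = Fin.snoc p.2 p.1 := by
    intro p
    show (Fin.insertNthEquiv (fun _ : Fin (d+1) => ℝ) (Fin.last d)) p = _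
    simp [Fin.insertNthEquiv, Fin.insertNth_last']
  have he_app : ∀ x : Fin (d+1) → ℝ,
      e x = (x (Fin.last d), fun j : Fin d => x j.castSucc) := by
    intro x
    show (Fin.insertNthEquiv (fun _ : Fin (d+1) => ℝ) (Fin.last d)).symm x = _
    simp [Fin.insertNthEquiv, Fin.succAbove_last]
    rfl
  have hcyl_eq : cyl ω = e ⁻¹' (I ×ˢ ω) := by
    ext x
    rw [Set.mem_preimage, he_app]
    simp only [cyl, Set.mem_setOf_eq, Set.mem_prod, hI_def]
    tauto
  set F : ℝ × (Fin d → ℝ) → ℝ := fun p => D (Fin.snoc p.2 p.1) ^ 2 with hF_def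
  have hFe : ∀ x : Fin (d+1) → ℝ, F (e x) = D x ^ 2 := by
    intro x
    have : Fin.snoc (e x).2 (e x).1 = x := by
      rw [← he_symm (e x), e.symm_apply_apply]
    rw [hF_def]; dsimp only; rw [this]
  have hrestr_eq : (volume : Measure (ℝ × (Fin d → ℝ))).restrict (I ×ˢ ω)
      = (volume.restrict I).prod (volume.restrict ω) := by
    rw [Measure.volume_eq_prod, Measure.prod_restrict]
  have hF_int : Integrable F ((volume.restrict I).prod (volume.restrict ω)) := by
    rw [← hrestr_eq]
    have h1 : Integrable (F ∘ e) (volume.restrict (e ⁻¹' (I ×ˢ ω))) := by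
      rw [← hcyl_eq]
      refine hD2int.congr ?_
      exact Filter.Eventually.of_forall fun x => (hFe x).symm
    exact ((mp.restrict_preimage (hI_meas.prod hω_meas)).integrable_comp_emb
      e.measurableEmbedding).mp h1
  set G : (Fin d → ℝ) → ℝ := fun x' => ∫ t in I, D (Fin.snoc x' t) ^ 2 with hG_def
  have hG_nonneg : ∀ x', 0 ≤ G x' := fun x' => integral_nonneg fun t => sq_nonneg _
  have hG_int : Integrable G (volume.restrict ω) := by
    have := hF_int.integral_prod_right
    simpa [hF_def, hG_def] using this
  have hInt_eq : ∫ x in cyl ω, D x ^ 2 = ∫ x' in ω, G x' := by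
    have h1 : ∫ x in cyl ω, D x ^ 2 = ∫ x in e ⁻¹' (I ×ˢ ω), F (e x) := by
      rw [← hcyl_eq]
      exact integral_congr_ae (Filter.Eventually.of_forall fun x => (hFe x).symm)
    rw [h1, mp.setIntegral_preimage_emb e.measurableEmbedding F (I ×ˢ ω), hrestr_eq,
      integral_prod_symm F hF_int]
  -- assemble
  set Ah : ℝ := ∫ x' in ω, (h x') ^ 2 with hAh_def
  have hAh0 : 0 ≤ Ah := integral_nonneg fun x => sq_nonneg _
  have habs_m : AEStronglyMeasurable (fun x' => |h x'|) (volume.restrict ω) := by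
    have := Real.continuous_sqrt.comp_aestronglyMeasurable hh.aestronglyMeasurable
    simpa [Real.sqrt_sq_eq_abs] using this
  have hsqrtG_m : AEStronglyMeasurable (fun x' => Real.sqrt (G x')) (volume.restrict ω) :=
    Real.continuous_sqrt.comp_aestronglyMeasurable hG_int.aestronglyMeasurable
  have hsqrtG_sq : (fun x' => Real.sqrt (G x') ^ 2) = G := by
    funext x'; exact Real.sq_sqrt (hG_nonneg x')
  have habs_sq : (fun x' => |h x'| ^ 2) = fun x' => (h x') ^ 2 := by
    funext x'; exact sq_abs _
  have hcs := cs_aux (μ := volume.restrict ω) (f := fun x' => Real.sqrt (G x'))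
    (g := fun x' => |h x'|) hsqrtG_m habs_m (fun _ => Real.sqrt_nonneg _) (fun _ => abs_nonneg _)
    (by rw [hsqrtG_sq]; exact hG_int) (by rw [habs_sq]; exact hh)
  have hmain : |∫ x' in ω, (v (Fin.snoc x' z) - ∫ t in I, v (Fin.snoc x' t)) * h x'|
      ≤ Real.sqrt (∫ x' in ω, G x') * Real.sqrt Ah := by
    have h1 : |∫ x' in ω, (v (Fin.snoc x' z) - ∫ t in I, v (Fin.snoc x' t)) * h x'|
        ≤ ∫ x' in ω, |v (Fin.snoc x' z) - ∫ t in I, v (Fin.snoc x' t)| * |h x'| := by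
      simpa [Real.norm_eq_abs, abs_mul] using norm_integral_le_integral_norm (μ := volume.restrict ω)
        (f := fun x' => (v (Fin.snoc x' z) - ∫ t in I, v (Fin.snoc x' t)) * h x')
    have h2 : ∫ x' in ω, |v (Fin.snoc x' z) - ∫ t in I, v (Fin.snoc x' t)| * |h x'|
        ≤ ∫ x' in ω, Real.sqrt (G x') * |h x'| := by
      refine integral_mono_of_nonneg
        (Filter.Eventually.of_forall fun x' => mul_nonneg (abs_nonneg _) (abs_nonneg _))
        hcs.1 (Filter.Eventually.of_forall fun x' => ?_)
      exact mul_le_mul_of_nonneg_right (key x') (abs_nonneg _)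
    have h3 := hcs.2
    rw [hsqrtG_sq, habs_sq] at h3
    calc |∫ x' in ω, (v (Fin.snoc x' z) - ∫ t in I, v (Fin.snoc x' t)) * h x'|
        ≤ ∫ x' in ω, Real.sqrt (G x') * |h x'| := le_trans h1 h2
      _ ≤ Real.sqrt (∫ x' in ω, G x') * Real.sqrt Ah := h3
  have hGD : ∫ x' in ω, G x' ≤ ε ^ 2 * ∫ x in cyl ω, gradEpsSq ε v x := by
    rw [← hInt_eq, ← integral_const_mul]
    exact integral_mono_of_nonneg (Filter.Eventually.of_forall fun x => sq_nonneg _)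
      (hvg.const_mul (ε ^ 2)) (Filter.Eventually.of_forall hDbound)
  have hsqrtGD : Real.sqrt (∫ x' in ω, G x')
      ≤ ε * Real.sqrt (∫ x in cyl ω, gradEpsSq ε v x) := by
    have := Real.sqrt_le_sqrt hGD
    rwa [Real.sqrt_mul (sq_nonneg ε), Real.sqrt_sq hε0.le] at this
  calc |∫ x' in ω, (v (Fin.snoc x' z) - ∫ t in I, v (Fin.snoc x' t)) * h x'|
      ≤ Real.sqrt (∫ x' in ω, G x') * Real.sqrt Ah := hmain
    _ ≤ (ε * Real.sqrt (∫ x in cyl ω, gradEpsSq ε v x)) * Real.sqrt Ah :=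
        mul_le_mul_of_nonneg_right hsqrtGD (Real.sqrt_nonneg _)
    _ = ε * Real.sqrt Ah * Real.sqrt (∫ x in cyl ω, gradEpsSq ε v x) := by ring
end
end

section
/- Let Ω = ω × (-1/2,1/2), 0 < ε ≤ 1, and let h ∈ L²(ω) and v ∈ (H¹(Ω))^d. Define the scaled symmetric strain e^ε by e^ε_{αβ}(v) = e_{αβ}(v), e^ε_{αd}(v) = ε^{-1}e_{αd}(v), e^ε_{dd}(v) = ε^{-2}e_{dd}(v). Then for any z ∈ [-1/2,1/2], |∫_ω (v_d(·,z) − m(v_d)) h| ≤ ε² ‖h‖_{L²(ω)} ‖e^ε(v)‖_{L²(Ω)}, where m(v_d)(x') = ∫_{-1/2}^{1/2} v_d(x',t) dt. -/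
open MeasureTheory Real

noncomputable section

/-- Symmetric gradient (strain) of a vector field. -/
def strain {d : ℕ} (u : (Fin (d + 1) → ℝ) → (Fin (d + 1) → ℝ)) (x : Fin (d + 1) → ℝ)
    (i j : Fin (d + 1)) : ℝ :=
  (pd (fun y => u y i) j x + pd (fun y => u y j) i x) / 2

/-- Scaling factors of the scaled strain `e^ε`: `1`, `ε⁻¹` or `ε⁻²` according to the number
of vertical indices. -/
def escale {d : ℕ} (ε : ℝ) (i j : Fin (d + 1)) : ℝ :=
  if i = Fin.last d then (if j = Fin.last d then ε⁻¹ ^ 2 else ε⁻¹)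
  else (if j = Fin.last d then ε⁻¹ else 1)

/-- Squared pointwise (Frobenius) norm of the scaled strain `e^ε(u)`. -/
def strainEpsSq {d : ℕ} (ε : ℝ) (u : (Fin (d + 1) → ℝ) → (Fin (d + 1) → ℝ))
    (x : Fin (d + 1) → ℝ) : ℝ :=
  ∑ i : Fin (d + 1), ∑ j : Fin (d + 1), (escale ε i j * strain u x i j) ^ 2

lemma aux_comp_cd {d : ℕ} {v : (Fin (d + 1) → ℝ) → (Fin (d + 1) → ℝ)} (hv : ContDiff ℝ 1 v)
    (i : Fin (d+1)) : ContDiff ℝ 1 (fun y => v y i) :=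
  (ContinuousLinearMap.proj (R := ℝ) (φ := fun _ : Fin (d+1) => ℝ) i).contDiff.comp hv

lemma aux_strain_cont {d : ℕ} {v : (Fin (d + 1) → ℝ) → (Fin (d + 1) → ℝ)} (hv : ContDiff ℝ 1 v)
    (i j : Fin (d+1)) : Continuous fun x => strain v x i j := by
  have h : ∀ i j : Fin (d+1), Continuous fun x => pd (fun y => v y i) j x := fun i j =>
    (((aux_comp_cd hv i).continuous_fderiv one_ne_zero).clm_apply continuous_const)
  exact ((h i j).add (h j i)).div_const 2

lemma aux_q_cont {d : ℕ} (ε : ℝ) {v : (Fin (d + 1) → ℝ) → (Fin (d + 1) → ℝ)}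
    (hv : ContDiff ℝ 1 v) : Continuous (strainEpsSq ε v) := by
  unfold strainEpsSq
  exact continuous_finset_sum _ fun i _ => continuous_finset_sum _ fun j _ =>
    (continuous_const.mul (aux_strain_cont hv i j)).pow 2

lemma aux_q_nonneg {d : ℕ} (ε : ℝ) (v : (Fin (d + 1) → ℝ) → (Fin (d + 1) → ℝ))
    (x : Fin (d+1) → ℝ) : 0 ≤ strainEpsSq ε v x :=
  Finset.sum_nonneg fun i _ => Finset.sum_nonneg fun j _ => sq_nonneg _

lemma aux_gb {d : ℕ} {ε : ℝ} (hε0 : 0 < ε) (v : (Fin (d + 1) → ℝ) → (Fin (d + 1) → ℝ))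
    (x : Fin (d+1) → ℝ) :
    |strain v x (Fin.last d) (Fin.last d)| ≤ ε^2 * Real.sqrt (strainEpsSq ε v x) := by
  set a := strain v x (Fin.last d) (Fin.last d) with ha
  have h1 : (ε⁻¹^2 * a)^2 ≤ strainEpsSq ε v x := by
    have h2 : escale ε (Fin.last d) (Fin.last d) = ε⁻¹^2 := by simp [escale]
    unfold strainEpsSq
    refine le_trans ?_ (Finset.single_le_sum
      (f := fun i => ∑ j, (escale ε i j * strain v x i j)^2)
      (fun i _ => Finset.sum_nonneg fun j _ => sq_nonneg _) (Finset.mem_univ (Fin.last d)))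
    refine le_trans ?_ (Finset.single_le_sum
      (f := fun j => (escale ε (Fin.last d) j * strain v x (Fin.last d) j)^2)
      (fun j _ => sq_nonneg _) (Finset.mem_univ (Fin.last d)))
    show (ε⁻¹ ^ 2 * a) ^ 2 ≤ (escale ε (Fin.last d) (Fin.last d) * strain v x (Fin.last d) (Fin.last d)) ^ 2
    rw [h2, ← ha]
  have h3 : |ε⁻¹^2 * a| ≤ Real.sqrt (strainEpsSq ε v x) := by
    rw [← Real.sqrt_sq_eq_abs]
    exact Real.sqrt_le_sqrt h1
  have h4 : ε^2 * ε⁻¹^2 = 1 := by field_simp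
  calc |a| = ε^2 * ε⁻¹^2 * |a| := by rw [h4, one_mul]
    _ = ε^2 * |ε⁻¹^2 * a| := by
        rw [abs_mul, abs_of_nonneg (by positivity : (0:ℝ) ≤ ε⁻¹^2), mul_assoc]
    _ ≤ ε^2 * Real.sqrt (strainEpsSq ε v x) := by
        exact mul_le_mul_of_nonneg_left h3 (by positivity)

lemma aux_snoc_cont {d : ℕ} :
    Continuous fun p : (Fin d → ℝ) × ℝ => (Fin.snoc p.1 p.2 : Fin (d+1) → ℝ) := by
  apply continuous_pi; intro i
  refine Fin.lastCases ?_ ?_ i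
  · simpa only [Fin.snoc_last] using continuous_snd
  · intro j; simp only [Fin.snoc_castSucc]; exact (continuous_apply j).comp continuous_fst

lemma aux_hasDerivAt {d : ℕ} {v : (Fin (d + 1) → ℝ) → (Fin (d + 1) → ℝ)} (hv : ContDiff ℝ 1 v)
    (x' : Fin d → ℝ) (t : ℝ) :
    HasDerivAt (fun s => v (Fin.snoc x' s) (Fin.last d))
      (strain v (Fin.snoc x' t) (Fin.last d) (Fin.last d)) t := by
  have hw : ContDiff ℝ 1 (fun y => v y (Fin.last d)) := aux_comp_cd hv _
  have hb : (fun s : ℝ => (Fin.snoc x' s : Fin (d+1) → ℝ))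
      = fun s => (Fin.snoc x' 0 : Fin (d+1) → ℝ) + s • Pi.single (Fin.last d) 1 := by
    funext s; funext i
    refine Fin.lastCases ?_ ?_ i
    · simp [Fin.snoc_last]
    · intro j
      simp [Fin.snoc_castSucc, Pi.single_eq_of_ne (Fin.castSucc_lt_last j).ne]
  have hc : HasDerivAt (fun s : ℝ => (Fin.snoc x' s : Fin (d+1) → ℝ))
      (Pi.single (Fin.last d) 1) t := by
    rw [hb]
    simpa using ((hasDerivAt_id t).smul_const
      (Pi.single (Fin.last d) (1:ℝ))).const_add (Fin.snoc x' 0 : Fin (d+1) → ℝ)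
  have hF : HasFDerivAt (fun y => v y (Fin.last d))
      (fderiv ℝ (fun y => v y (Fin.last d)) (Fin.snoc x' t)) (Fin.snoc x' t) :=
    (hw.differentiable one_ne_zero (Fin.snoc x' t)).hasFDerivAt
  have hco := hF.comp_hasDerivAt t hc
  have hgeq : strain v (Fin.snoc x' t) (Fin.last d) (Fin.last d)
      = fderiv ℝ (fun y => v y (Fin.last d)) (Fin.snoc x' t) (Pi.single (Fin.last d) 1) := by
    unfold strain pd
    rw [add_self_div_two]
  rw [hgeq]; exact hco

lemma aux_cs {α : Type*} [MeasurableSpace α] (μ : Measure α) (f g : α → ℝ)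
    (hf : MemLp f 2 μ) (hg : MemLp g 2 μ) (hf0 : ∀ a, 0 ≤ f a) (hg0 : ∀ a, 0 ≤ g a) :
    ∫ a, f a * g a ∂μ ≤ Real.sqrt (∫ a, (f a)^2 ∂μ) * Real.sqrt (∫ a, (g a)^2 ∂μ) := by
  have hpq : Real.HolderConjugate 2 2 := Real.HolderConjugate.two_two
  have h := integral_mul_le_Lp_mul_Lq_of_nonneg (μ := μ) hpq
    (ae_of_all _ hf0) (ae_of_all _ hg0) (by simpa using hf) (by simpa using hg)
  simp only [Real.rpow_two] at h
  rw [Real.sqrt_eq_rpow, Real.sqrt_eq_rpow]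
  exact h

lemma aux_mul_int {α : Type*} [MeasurableSpace α] (μ : Measure α) (f g : α → ℝ)
    (hfm : AEStronglyMeasurable f μ) (hgm : AEStronglyMeasurable g μ)
    (hf : Integrable (fun a => (f a)^2) μ) (hg : Integrable (fun a => (g a)^2) μ) :
    Integrable (fun a => f a * g a) μ := by
  have hb : Integrable (fun a => ((f a)^2 + (g a)^2)/2) μ := by
    simpa using (hf.add hg).div_const 2
  refine Integrable.mono' hb (hfm.mul hgm) (ae_of_all _ fun a => ?_)
  rw [Real.norm_eq_abs, abs_mul]
  nlinarith [two_mul_le_add_sq |f a| |g a|, sq_abs (f a), sq_abs (g a),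
    abs_nonneg (f a), abs_nonneg (g a)]

lemma aux_pointwise {d : ℕ} {ε : ℝ} (hε0 : 0 < ε)
    {v : (Fin (d + 1) → ℝ) → (Fin (d + 1) → ℝ)} (hv : ContDiff ℝ 1 v)
    (x' : Fin d → ℝ) {z : ℝ} (hz : z ∈ Set.Icc (-(1:ℝ)/2) (1/2)) :
    |v (Fin.snoc x' z) (Fin.last d)
        - ∫ t in Set.Ioo (-(1:ℝ)/2) (1/2), v (Fin.snoc x' t) (Fin.last d)|
      ≤ ε^2 * ∫ s in Set.Ioo (-(1:ℝ)/2) (1/2),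
          Real.sqrt (strainEpsSq ε v (Fin.snoc x' s)) := by
  set I : Set ℝ := Set.Ioo (-(1:ℝ)/2) (1/2) with hIdef
  have hIvol : volume I = 1 := by rw [hIdef, Real.volume_Ioo]; norm_num
  set f : ℝ → ℝ := fun s => v (Fin.snoc x' s) (Fin.last d) with hfdef
  set φ : ℝ → ℝ := fun s => strain v (Fin.snoc x' s) (Fin.last d) (Fin.last d) with hφdef
  have hsc : Continuous fun s : ℝ => (Fin.snoc x' s : Fin (d+1) → ℝ) :=
    aux_snoc_cont.comp (continuous_const.prodMk continuous_id)
  have hfc : Continuous f := ((aux_comp_cd hv (Fin.last d)).continuous).comp hsc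
  have hφc : Continuous φ := (aux_strain_cont hv _ _).comp hsc
  have hsqc : Continuous fun s => Real.sqrt (strainEpsSq ε v (Fin.snoc x' s)) :=
    ((aux_q_cont ε hv).comp hsc).sqrt
  have hIccIoo : volume (Set.Icc (-(1:ℝ)/2) (1/2) \ I) = 0 := by
    rw [hIdef, Set.Icc_diff_Ioo_same (by norm_num : -(1:ℝ)/2 ≤ 1/2)]
    exact Set.Countable.measure_zero ((Set.countable_singleton _).insert _) _
  have hintOn : ∀ (u : ℝ → ℝ), Continuous u → IntegrableOn u I volume := fun u hu =>
    (hu.integrableOn_Icc (a := -(1:ℝ)/2) (b := 1/2)).mono_set Set.Ioo_subset_Icc_self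
  have key : ∀ t : ℝ, f z - f t = ∫ s in t..z, φ s := by
    intro t
    rw [intervalIntegral.integral_eq_sub_of_hasDerivAt
      (fun s _ => aux_hasDerivAt hv x' s) (hφc.intervalIntegrable t z)]
  have habs : ∀ t ∈ I, |f z - f t| ≤ ∫ s in I, |φ s| := by
    intro t ht
    rw [key t]
    have hsub : Set.uIoc t z ⊆ Set.Icc (-(1:ℝ)/2) (1/2) :=
      Set.uIoc_subset_uIcc.trans (Set.uIcc_subset_Icc (Set.mem_Icc_of_Ioo ht) hz)
    have h1 : |∫ s in t..z, φ s| ≤ ∫ s in Set.uIoc t z, |φ s| := by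
      simpa [Real.norm_eq_abs] using
        intervalIntegral.norm_integral_le_integral_norm_uIoc (f := φ) (a := t) (b := z) (μ := volume)
    refine h1.trans ?_
    refine setIntegral_mono_set (hintOn _ hφc.abs) (ae_of_all _ fun s => abs_nonneg _) ?_
    rw [MeasureTheory.ae_le_set]
    refine measure_mono_null (fun x hx => ?_) hIccIoo
    exact (Set.mem_diff x).mpr ⟨hsub (Set.mem_of_mem_diff hx), Set.notMem_of_mem_diff hx⟩
  have hconstI : ∀ c : ℝ, IntegrableOn (fun _ : ℝ => c) I volume := fun c =>
    integrableOn_const (by rw [hIvol]; exact ENNReal.one_ne_top)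
  have h0 : f z - ∫ t in I, f t = ∫ t in I, (f z - f t) := by
    rw [integral_sub (hconstI (f z)) (hintOn f hfc), setIntegral_const, measureReal_def, hIvol]
    simp
  show |f z - ∫ t in I, f t| ≤ ε ^ 2 * ∫ s in I, Real.sqrt (strainEpsSq ε v (Fin.snoc x' s))
  rw [h0]
  calc |∫ t in I, (f z - f t)| ≤ ∫ t in I, |f z - f t| := by
        simpa [Real.norm_eq_abs] using
          norm_integral_le_integral_norm (μ := volume.restrict I) (f := fun t => f z - f t)
    _ ≤ ∫ t in I, (∫ s in I, |φ s|) := by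
        refine integral_mono_of_nonneg (ae_of_all _ fun t => abs_nonneg _) (hconstI _) ?_
        exact (ae_restrict_iff' measurableSet_Ioo).2 (ae_of_all _ habs)
    _ = ∫ s in I, |φ s| := by rw [setIntegral_const, measureReal_def, hIvol]; simp
    _ ≤ ∫ s in I, ε^2 * Real.sqrt (strainEpsSq ε v (Fin.snoc x' s)) := by
        refine integral_mono_of_nonneg (ae_of_all _ fun s => abs_nonneg _)
          ((hintOn _ hsqc).const_mul _) (ae_of_all _ fun s => aux_gb hε0 v _)
    _ = ε^2 * ∫ s in I, Real.sqrt (strainEpsSq ε v (Fin.snoc x' s)) := by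
        exact integral_const_mul (ε^2) _


/-- Thin-plate Poincaré–Wirtinger estimate for the vertical component:
`|∫_ω (v_d(·,z) − m(v_d)) h| ≤ ε² ‖h‖_{L²(ω)} ‖e^ε(v)‖_{L²(Ω)}`. -/
theorem statement9
    (d : ℕ) (ω : Set (Fin d → ℝ))
    (hω_bdd : Bornology.IsBounded ω) (hω_meas : MeasurableSet ω)
    (ε : ℝ) (hε0 : 0 < ε) (hε1 : ε ≤ 1)
    (h : (Fin d → ℝ) → ℝ) (v : (Fin (d + 1) → ℝ) → (Fin (d + 1) → ℝ))
    (hv : ContDiff ℝ 1 v)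
    (hh : Integrable (fun x' => (h x') ^ 2) (volume.restrict ω))
    (hstr : Integrable (fun x => strainEpsSq ε v x) (volume.restrict (cyl ω)))
    (z : ℝ) (hz : z ∈ Set.Icc (-(1:ℝ)/2) (1/2)) :
    |∫ x' in ω,
        (v (Fin.snoc x' z) (Fin.last d)
          - ∫ t in Set.Ioo (-(1:ℝ)/2) (1/2), v (Fin.snoc x' t) (Fin.last d)) * h x'|
      ≤ ε ^ 2 * Real.sqrt (∫ x' in ω, (h x') ^ 2)
          * Real.sqrt (∫ x in cyl ω, strainEpsSq ε v x) := by
  classical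
  set I : Set ℝ := Set.Ioo (-(1:ℝ)/2) (1/2) with hIdef
  have hIvol : volume I = 1 := by rw [hIdef, Real.volume_Ioo]; norm_num
  have hImeas : MeasurableSet I := measurableSet_Ioo
  haveI : IsFiniteMeasure (volume.restrict I) :=
    ⟨by rw [Measure.restrict_apply_univ, hIvol]; exact ENNReal.one_lt_top⟩
  set q : (Fin (d+1) → ℝ) → ℝ := strainEpsSq ε v with hqdef
  have hqc : Continuous q := aux_q_cont ε hv
  have hq0 : ∀ x, 0 ≤ q x := aux_q_nonneg ε v
  -- Fubini setup
  set e := MeasurableEquiv.piFinSuccAbove (fun _ : Fin (d+1) => ℝ) (Fin.last d) with hedef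
  have hev : MeasurePreserving e :=
    volume_preserving_piFinSuccAbove (fun _ : Fin (d+1) => ℝ) (Fin.last d)
  have hsymm : ∀ p : ℝ × (Fin d → ℝ), e.symm p = Fin.snoc p.2 p.1 := by
    intro p
    rw [hedef]
    simp only [MeasurableEquiv.piFinSuccAbove_symm_apply, Fin.insertNthEquiv,
      Equiv.coe_fn_mk, Fin.insertNth_last']
  have hinv : ∀ x : Fin (d+1) → ℝ, Fin.snoc ((e x).2) ((e x).1) = x := fun x => by
    rw [← hsymm (e x)]; exact e.symm_apply_apply x
  have hrn : ∀ x : Fin (d+1) → ℝ, (Fin.last d).removeNth x = fun i => x i.castSucc := by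
    intro x; funext i
    simp only [Fin.removeNth, Fin.succAbove_last]
  have hcyl : cyl ω = e ⁻¹' (I ×ˢ ω) := by
    ext x
    rw [hedef]
    simp only [cyl, Set.mem_setOf_eq, Set.mem_preimage, Set.mem_prod,
      MeasurableEquiv.piFinSuccAbove_apply, Fin.insertNthEquiv, Equiv.coe_fn_symm_mk,
      hrn, hIdef]
    tauto
  have hSmeas : MeasurableSet (I ×ˢ ω) := hImeas.prod hω_meas
  have hprodmeas : (volume : Measure (ℝ × (Fin d → ℝ))).restrict (I ×ˢ ω)
      = ((volume : Measure ℝ).restrict I).prod ((volume : Measure (Fin d → ℝ)).restrict ω) := by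
    rw [Measure.volume_eq_prod, Measure.prod_restrict]
  have h1 : MeasurePreserving e (volume.restrict (cyl ω))
      ((volume : Measure (ℝ × (Fin d → ℝ))).restrict (I ×ˢ ω)) := by
    rw [hcyl]; exact hev.restrict_preimage hSmeas
  have h3 : Integrable (fun p : ℝ × (Fin d → ℝ) => q (Fin.snoc p.2 p.1))
      (((volume : Measure ℝ).restrict I).prod ((volume : Measure (Fin d → ℝ)).restrict ω)) := by
    rw [← hprodmeas, ← h1.integrable_comp_emb e.measurableEmbedding]
    have heq : ((fun p : ℝ × (Fin d → ℝ) => q (Fin.snoc p.2 p.1)) ∘ e) = q := by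
      funext x; simp only [Function.comp_apply, hinv]
    rw [heq]; exact hstr
  set H : (Fin d → ℝ) → ℝ := fun x' => ∫ s in I, q (Fin.snoc x' s) with hHdef
  have hHint : Integrable H (volume.restrict ω) := h3.integral_prod_right
  have hH0 : ∀ x', 0 ≤ H x' := fun x' => integral_nonneg fun s => hq0 _
  have hqcyl : ∫ x in cyl ω, q x = ∫ x' in ω, H x' := by
    have htr : ∫ x in cyl ω, q x = ∫ p in I ×ˢ ω, q (Fin.snoc p.2 p.1) := by
      rw [hcyl, ← hev.setIntegral_preimage_emb e.measurableEmbedding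
        (fun p => q (Fin.snoc p.2 p.1)) (I ×ˢ ω)]
      simp only [hinv]
    rw [htr, hprodmeas]
    exact integral_prod_symm _ h3
  -- the function G
  set G : (Fin d → ℝ) → ℝ := fun x' => ∫ s in I, Real.sqrt (q (Fin.snoc x' s)) with hGdef
  have hG0 : ∀ x', 0 ≤ G x' := fun x' => integral_nonneg fun s => Real.sqrt_nonneg _
  have hGsm : AEStronglyMeasurable G (volume.restrict ω) := by
    have hc : Continuous fun p : (Fin d → ℝ) × ℝ => Real.sqrt (q (Fin.snoc p.1 p.2)) :=
      (hqc.comp aux_snoc_cont).sqrt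
    exact (hc.stronglyMeasurable.integral_prod_right').aestronglyMeasurable
  have hqint : ∀ x' : Fin d → ℝ, IntegrableOn (fun s => q (Fin.snoc x' s)) I volume := by
    intro x'
    have hsc : Continuous fun s : ℝ => (Fin.snoc x' s : Fin (d+1) → ℝ) :=
      aux_snoc_cont.comp (continuous_const.prodMk continuous_id)
    exact ((hqc.comp hsc).integrableOn_Icc (a := -(1:ℝ)/2) (b := 1/2)).mono_set
      Set.Ioo_subset_Icc_self
  have hGH : ∀ x', G x' ≤ Real.sqrt (H x') := by
    intro x'
    have hsc : Continuous fun s : ℝ => (Fin.snoc x' s : Fin (d+1) → ℝ) :=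
      aux_snoc_cont.comp (continuous_const.prodMk continuous_id)
    have hfc : Continuous fun s : ℝ => Real.sqrt (q (Fin.snoc x' s)) := (hqc.comp hsc).sqrt
    have hfL2 : MemLp (fun s : ℝ => Real.sqrt (q (Fin.snoc x' s))) 2 (volume.restrict I) := by
      refine (memLp_two_iff_integrable_sq hfc.aestronglyMeasurable.restrict).2 ?_
      have : (fun s : ℝ => Real.sqrt (q (Fin.snoc x' s)) ^ 2) = fun s => q (Fin.snoc x' s) :=
        funext fun s => Real.sq_sqrt (hq0 _)
      rw [this]; exact hqint x'
    have h1L2 : MemLp (fun _ : ℝ => (1:ℝ)) 2 (volume.restrict I) := memLp_const 1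
    have hcs := aux_cs (volume.restrict I) (fun s => Real.sqrt (q (Fin.snoc x' s)))
      (fun _ => (1:ℝ)) hfL2 h1L2 (fun s => Real.sqrt_nonneg _) (fun _ => zero_le_one)
    simp only [mul_one, one_pow] at hcs
    have hone : ∫ (_ : ℝ) in I, (1:ℝ) = 1 := by
      rw [setIntegral_const, measureReal_def, hIvol]; simp
    have h2 : ∫ s in I, Real.sqrt (q (Fin.snoc x' s)) ^ 2 = H x' :=
      integral_congr_ae (ae_of_all _ fun s => Real.sq_sqrt (hq0 _))
    rw [hone, Real.sqrt_one, mul_one, h2] at hcs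
    exact hcs
  have hG2H : ∀ x', (G x')^2 ≤ H x' := by
    intro x'
    have h1 := hGH x'
    nlinarith [Real.sq_sqrt (hH0 x'), hG0 x', Real.sqrt_nonneg (H x')]
  have hG2int : Integrable (fun x' => (G x')^2) (volume.restrict ω) := by
    refine Integrable.mono' hHint ((continuous_pow 2).comp_aestronglyMeasurable hGsm)
      (ae_of_all _ fun x' => ?_)
    rw [Real.norm_eq_abs, abs_of_nonneg (sq_nonneg _)]
    exact hG2H x'
  have hGL2 : MemLp G 2 (volume.restrict ω) := (memLp_two_iff_integrable_sq hGsm).2 hG2int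
  -- |h|
  have hasm : AEStronglyMeasurable (fun x' => |h x'|) (volume.restrict ω) := by
    have heq : (fun x' => |h x'|) = fun x' => Real.sqrt ((h x')^2) :=
      funext fun x' => (Real.sqrt_sq_eq_abs _).symm
    rw [heq]
    exact Real.continuous_sqrt.comp_aestronglyMeasurable hh.aestronglyMeasurable
  have haint2 : Integrable (fun x' => |h x'|^2) (volume.restrict ω) := by
    simpa [sq_abs] using hh
  have haL2 : MemLp (fun x' => |h x'|) 2 (volume.restrict ω) :=
    (memLp_two_iff_integrable_sq hasm).2 haint2
  -- pointwise estimate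
  have hpt : ∀ x' : Fin d → ℝ,
      |v (Fin.snoc x' z) (Fin.last d) - ∫ t in I, v (Fin.snoc x' t) (Fin.last d)|
        ≤ ε^2 * G x' := fun x' => aux_pointwise hε0 hv x' hz
  -- main chain
  have hmulint : Integrable (fun x' => ε^2 * (G x' * |h x'|)) (volume.restrict ω) :=
    (aux_mul_int (volume.restrict ω) G (fun x' => |h x'|) hGsm hasm hG2int haint2).const_mul _
  calc |∫ x' in ω, (v (Fin.snoc x' z) (Fin.last d)
          - ∫ t in I, v (Fin.snoc x' t) (Fin.last d)) * h x'|
      ≤ ∫ x' in ω, |v (Fin.snoc x' z) (Fin.last d)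
          - ∫ t in I, v (Fin.snoc x' t) (Fin.last d)| * |h x'| := by
        simpa [Real.norm_eq_abs, abs_mul] using norm_integral_le_integral_norm
          (μ := volume.restrict ω) (f := fun x' => (v (Fin.snoc x' z) (Fin.last d)
            - ∫ t in I, v (Fin.snoc x' t) (Fin.last d)) * h x')
    _ ≤ ∫ x' in ω, ε^2 * (G x' * |h x'|) := by
        refine integral_mono_of_nonneg (ae_of_all _ fun x' => mul_nonneg (abs_nonneg _) (abs_nonneg _)) hmulint
          (ae_of_all _ fun x' => ?_)
        dsimp only
        calc |v (Fin.snoc x' z) (Fin.last d) - ∫ t in I, v (Fin.snoc x' t) (Fin.last d)| * |h x'|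
            ≤ (ε^2 * G x') * |h x'| := mul_le_mul_of_nonneg_right (hpt x') (abs_nonneg _)
          _ = ε^2 * (G x' * |h x'|) := by ring
    _ = ε^2 * ∫ x' in ω, G x' * |h x'| := integral_const_mul _ _
    _ ≤ ε^2 * (Real.sqrt (∫ x' in ω, |h x'|^2) * Real.sqrt (∫ x' in ω, (G x')^2)) := by
        refine mul_le_mul_of_nonneg_left ?_ (by positivity)
        have hcs := aux_cs (volume.restrict ω) (fun x' => |h x'|) G haL2 hGL2
          (fun _ => abs_nonneg _) hG0
        calc ∫ x' in ω, G x' * |h x'| = ∫ x' in ω, |h x'| * G x' := by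
              simp only [mul_comm]
          _ ≤ _ := hcs
    _ ≤ ε^2 * (Real.sqrt (∫ x' in ω, (h x')^2) * Real.sqrt (∫ x in cyl ω, q x)) := by
        refine mul_le_mul_of_nonneg_left ?_ (by positivity)
        refine mul_le_mul ?_ ?_ (Real.sqrt_nonneg _) (Real.sqrt_nonneg _)
        · apply le_of_eq
          congr 1
          exact integral_congr_ae (ae_of_all _ fun x' => sq_abs _)
        · apply Real.sqrt_le_sqrt
          calc ∫ x' in ω, (G x')^2 ≤ ∫ x' in ω, H x' :=
                integral_mono_of_nonneg (ae_of_all _ fun x' => sq_nonneg _) hHint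
                  (ae_of_all _ hG2H)
            _ = ∫ x in cyl ω, q x := hqcyl.symm
    _ = ε ^ 2 * Real.sqrt (∫ x' in ω, (h x')^2) * Real.sqrt (∫ x in cyl ω, q x) := by ring
end
end

section
/- Let d = 2 and let S*, defined for x_d ∈ (-1/2,1/2) by S*_{αβγδ}(x_d) = (e_α⊗e_β) : ∫_Y A(·,x_d)(e(W^{γδ})(·,x_d) − x_d e_γ⊗e_δ), where W^{γδ} is the bending corrector. Then for every odd ξ ∈ L²(-1/2,1/2): ∫_{-1/2}^{1/2} ξ(x_d) S*_{αβγδ}(x_d) dx_d = ∫_{-1/2}^{1/2} x_d (T^{*,ξ}_{αβ}(x_d))_{γδ} dx_d, where T^{*,ξ}_{αβ}(x_d) = ∫_Y A(x',x_d)(e(W^{αβ,ξ})(x',x_d) − ξ(x_d) e_α⊗e_β) dx' and W^{αβ,ξ} ∈ W(𝒴) solves ∫_𝒴 A(e(W^{αβ,ξ}) − ξ(x_d)e_α⊗e_β):e(v) = 0 for all v ∈ W(𝒴). Moreover ‖S*_{αβγδ}‖_{L²(-1/2,1/2)} ≤ c₊²/c₋ + c₊. -/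
open MeasureTheory Real

noncomputable section

/-- Reflection of a point with respect to the midplane `x_d = 0`. -/
def reflV {d : ℕ} (x : Fin (d + 1) → ℝ) : Fin (d + 1) → ℝ :=
  Function.update x (Fin.last d) (-(x (Fin.last d)))

/-- Sign attached to an index: `-1` for the vertical index, `1` otherwise. -/
def vsgn {d : ℕ} (i : Fin (d + 1)) : ℝ := if i = Fin.last d then -1 else 1

/-- The matrix `e_α ⊗ e_β` (planar indices viewed inside `ℝ^{d+1}`). -/
def membM {d : ℕ} (α β : Fin d) (k l : Fin (d + 1)) : ℝ :=
  if k = α.castSucc ∧ l = β.castSucc then 1 else 0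

/-- The usual symmetries of an elasticity tensor:
`A_{ijkl} = A_{jikl} = A_{ijlk} = A_{klij}`. -/
def tensSym {d : ℕ}
    (A : (Fin (d + 1) → ℝ) → Fin (d + 1) → Fin (d + 1) → Fin (d + 1) → Fin (d + 1) → ℝ) :
    Prop :=
  ∀ (x : Fin (d + 1) → ℝ) (i j k l : Fin (d + 1)),
    A x i j k l = A x j i k l ∧ A x i j k l = A x i j l k ∧ A x i j k l = A x k l i j

/-- Uniform ellipticity of the tensor on symmetric matrices: `c₋|ξ|² ≤ ξ : Aξ`. -/
def tensElliptic {d : ℕ}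
    (A : (Fin (d + 1) → ℝ) → Fin (d + 1) → Fin (d + 1) → Fin (d + 1) → Fin (d + 1) → ℝ)
    (cm : ℝ) : Prop :=
  ∀ (x : Fin (d + 1) → ℝ) (ξ : Fin (d + 1) → Fin (d + 1) → ℝ), (∀ i j, ξ i j = ξ j i) →
    cm * (∑ i : Fin (d + 1), ∑ j : Fin (d + 1), (ξ i j) ^ 2)
      ≤ ∑ i : Fin (d + 1), ∑ j : Fin (d + 1), ∑ k : Fin (d + 1), ∑ l : Fin (d + 1),
          ξ i j * A x i j k l * ξ k l

/-- Uniform boundedness of the tensor on symmetric matrices: `|Aξ| ≤ c₊|ξ|`. -/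
def tensBounded {d : ℕ}
    (A : (Fin (d + 1) → ℝ) → Fin (d + 1) → Fin (d + 1) → Fin (d + 1) → Fin (d + 1) → ℝ)
    (cp : ℝ) : Prop :=
  ∀ (x : Fin (d + 1) → ℝ) (ξ : Fin (d + 1) → Fin (d + 1) → ℝ), (∀ i j, ξ i j = ξ j i) →
    ∑ i : Fin (d + 1), ∑ j : Fin (d + 1),
        (∑ k : Fin (d + 1), ∑ l : Fin (d + 1), A x i j k l * ξ k l) ^ 2
      ≤ cp ^ 2 * ∑ i : Fin (d + 1), ∑ j : Fin (d + 1), (ξ i j) ^ 2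

/-- Membrane strain field `e(w^{αβ}) + e_α ⊗ e_β`. -/
def memStrain {d : ℕ} (w : Fin d → Fin d → (Fin (d + 1) → ℝ) → (Fin (d + 1) → ℝ))
    (α β : Fin d) (x : Fin (d + 1) → ℝ) (k l : Fin (d + 1)) : ℝ :=
  strain (w α β) x k l + membM α β k l

/-- Bending strain field `e(W^{αβ}) − x_d e_α ⊗ e_β`. -/
def bendStrain {d : ℕ} (W : Fin d → Fin d → (Fin (d + 1) → ℝ) → (Fin (d + 1) → ℝ))
    (α β : Fin d) (x : Fin (d + 1) → ℝ) (k l : Fin (d + 1)) : ℝ :=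
  strain (W α β) x k l - x (Fin.last d) * membM α β k l

/-- The membrane corrector equations. -/
def MembCorr {d : ℕ}
    (A : (Fin (d + 1) → ℝ) → Fin (d + 1) → Fin (d + 1) → Fin (d + 1) → Fin (d + 1) → ℝ)
    (w : Fin d → Fin d → (Fin (d + 1) → ℝ) → (Fin (d + 1) → ℝ)) : Prop :=
  ∀ (α β : Fin d) (v : (Fin (d + 1) → ℝ) → (Fin (d + 1) → ℝ)),
    ContDiff ℝ 1 v → XPeriodic v →
    (∫ x in cellY d, ∑ i : Fin (d + 1), ∑ j : Fin (d + 1),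
      (∑ k : Fin (d + 1), ∑ l : Fin (d + 1), A x i j k l * memStrain w α β x k l)
        * strain v x i j) = 0

/-- The bending corrector equations. -/
def BendCorr {d : ℕ}
    (A : (Fin (d + 1) → ℝ) → Fin (d + 1) → Fin (d + 1) → Fin (d + 1) → Fin (d + 1) → ℝ)
    (W : Fin d → Fin d → (Fin (d + 1) → ℝ) → (Fin (d + 1) → ℝ)) : Prop :=
  ∀ (α β : Fin d) (v : (Fin (d + 1) → ℝ) → (Fin (d + 1) → ℝ)),
    ContDiff ℝ 1 v → XPeriodic v →
    (∫ x in cellY d, ∑ i : Fin (d + 1), ∑ j : Fin (d + 1),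
      (∑ k : Fin (d + 1), ∑ l : Fin (d + 1), A x i j k l * bendStrain W α β x k l)
        * strain v x i j) = 0

/-- The homogenized membrane tensor `K*₁₁`. -/
def K11 {d : ℕ}
    (A : (Fin (d + 1) → ℝ) → Fin (d + 1) → Fin (d + 1) → Fin (d + 1) → Fin (d + 1) → ℝ)
    (w : Fin d → Fin d → (Fin (d + 1) → ℝ) → (Fin (d + 1) → ℝ)) (α β γ δ : Fin d) : ℝ :=
  ∫ x in cellY d, ∑ i : Fin (d + 1), ∑ j : Fin (d + 1), ∑ k : Fin (d + 1), ∑ l : Fin (d + 1),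
    A x i j k l * memStrain w α β x k l * memStrain w γ δ x i j

/-- The homogenized coupling tensor `K*₁₂`. -/
def K12 {d : ℕ}
    (A : (Fin (d + 1) → ℝ) → Fin (d + 1) → Fin (d + 1) → Fin (d + 1) → Fin (d + 1) → ℝ)
    (w W : Fin d → Fin d → (Fin (d + 1) → ℝ) → (Fin (d + 1) → ℝ)) (α β γ δ : Fin d) : ℝ :=
  ∫ x in cellY d, ∑ i : Fin (d + 1), ∑ j : Fin (d + 1), ∑ k : Fin (d + 1), ∑ l : Fin (d + 1),
    A x i j k l * memStrain w α β x k l * bendStrain W γ δ x i j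

/-- The homogenized bending tensor `K*₂₂`. -/
def K22 {d : ℕ}
    (A : (Fin (d + 1) → ℝ) → Fin (d + 1) → Fin (d + 1) → Fin (d + 1) → Fin (d + 1) → ℝ)
    (W : Fin d → Fin d → (Fin (d + 1) → ℝ) → (Fin (d + 1) → ℝ)) (α β γ δ : Fin d) : ℝ :=
  ∫ x in cellY d, ∑ i : Fin (d + 1), ∑ j : Fin (d + 1), ∑ k : Fin (d + 1), ∑ l : Fin (d + 1),
    A x i j k l * bendStrain W α β x k l * bendStrain W γ δ x i j

/-- The sliced tensor `S*_{αβγδ}(x_d) = (e_α⊗e_β) : ∫_Y A(e(W^{γδ}) − x_d e_γ⊗e_δ)`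
(dimension `d = 2`: planar indices in `Fin 1`). -/
def Sstar (A : (Fin (1 + 1) → ℝ) → Fin (1 + 1) → Fin (1 + 1) → Fin (1 + 1) → Fin (1 + 1) → ℝ)
    (W : Fin 1 → Fin 1 → (Fin (1 + 1) → ℝ) → (Fin (1 + 1) → ℝ))
    (α β γ δ : Fin 1) (t : ℝ) : ℝ :=
  ∫ x' in unitCube 1, ∑ k : Fin (1 + 1), ∑ l : Fin (1 + 1),
    A (Fin.snoc x' t) α.castSucc β.castSucc k l *
      (strain (W γ δ) (Fin.snoc x' t) k l - t * membM γ δ k l)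

/-- The sliced matrix `(T^{*,ξ}_{αβ}(x_d))_{γδ} = ∫_Y [A(e(W^{αβ,ξ}) − ξ(x_d) e_α⊗e_β)]_{γδ}`. -/
def Txi (A : (Fin (1 + 1) → ℝ) → Fin (1 + 1) → Fin (1 + 1) → Fin (1 + 1) → Fin (1 + 1) → ℝ)
    (Wxi : (Fin (1 + 1) → ℝ) → (Fin (1 + 1) → ℝ)) (ξ : ℝ → ℝ)
    (α β γ δ : Fin 1) (t : ℝ) : ℝ :=
  ∫ x' in unitCube 1, ∑ k : Fin (1 + 1), ∑ l : Fin (1 + 1),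
    A (Fin.snoc x' t) γ.castSucc δ.castSucc k l *
      (strain Wxi (Fin.snoc x' t) k l - ξ t * membM α β k l)

lemma snoc_one (y : Fin 1 → ℝ) (t : ℝ) : (Fin.snoc y t : Fin 2 → ℝ) 1 = t :=
  Fin.snoc_last (α := fun _ => ℝ) t y

lemma esymm_eq (p : ℝ × (Fin 1 → ℝ)) :
    (MeasurableEquiv.piFinSuccAbove (fun _ : Fin 2 => ℝ) (Fin.last 1)).symm p
      = Fin.snoc p.2 p.1 := by
  simp [MeasurableEquiv.piFinSuccAbove, Fin.insertNthEquiv, Fin.insertNth_last]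
  exact Fin.insertNth_last (α := fun _ => ℝ) _ _

lemma preim : (MeasurableEquiv.piFinSuccAbove (fun _ : Fin 2 => ℝ) (Fin.last 1)).symm ⁻¹' cellY 1
    = (Set.Ioo (-(1:ℝ)/2) (1/2)) ×ˢ unitCube 1 := by
  ext ⟨t, x'⟩
  simp [MeasurableEquiv.piFinSuccAbove, cellY, cyl, Fin.insertNthEquiv, Fin.insertNth_last,
    Fin.snoc_castSucc, Fin.snoc_last, and_comm]
  intro _ _
  have h : (fun i : Fin 1 => Fin.insertNth (α := fun _ => ℝ) 1 t x' i.castSucc) = x' := by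
    funext i; exact (congrFun (Fin.insertNth_last' (β := ℝ) t x') i.castSucc).trans (Fin.snoc_castSucc (α := fun _ => ℝ) _ _ _)
  rw [h]

lemma integrable_prod_of_cell {f : (Fin 2 → ℝ) → ℝ} (hf : IntegrableOn f (cellY 1)) :
    Integrable (fun p : ℝ × (Fin 1 → ℝ) => f (Fin.snoc p.2 p.1))
      ((volume.restrict (Set.Ioo (-(1:ℝ)/2) (1/2))).prod (volume.restrict (unitCube 1))) := by
  have hmp := (volume_preserving_piFinSuccAbove (fun _ : Fin 2 => ℝ) (Fin.last 1)).symm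
  have hemb := (MeasurableEquiv.piFinSuccAbove (fun _ : Fin 2 => ℝ)
    (Fin.last 1)).symm.measurableEmbedding
  have h := (hmp.integrableOn_comp_preimage hemb).2 hf
  rw [preim] at h
  have : (f ∘ ⇑(MeasurableEquiv.piFinSuccAbove (fun _ : Fin 2 => ℝ) (Fin.last 1)).symm)
      = fun p : ℝ × (Fin 1 → ℝ) => f (Fin.snoc p.2 p.1) := by
    funext p; simp only [Function.comp_apply, esymm_eq]
  rw [this] at h
  rwa [IntegrableOn, Measure.volume_eq_prod, ← Measure.prod_restrict] at h

lemma fubini_cell (f : (Fin 2 → ℝ) → ℝ) (hf : IntegrableOn f (cellY 1)) :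
    ∫ x in cellY 1, f x
      = ∫ t in Set.Ioo (-(1:ℝ)/2) (1/2), ∫ x' in unitCube 1, f (Fin.snoc x' t) := by
  have hmp := (volume_preserving_piFinSuccAbove (fun _ : Fin 2 => ℝ) (Fin.last 1)).symm
  have hemb := (MeasurableEquiv.piFinSuccAbove (fun _ : Fin 2 => ℝ)
    (Fin.last 1)).symm.measurableEmbedding
  have h1 := hmp.setIntegral_preimage_emb hemb f (cellY 1)
  rw [← h1, preim]
  have hint : IntegrableOn (fun p : ℝ × (Fin 1 → ℝ) =>
      f ((MeasurableEquiv.piFinSuccAbove (fun _ : Fin 2 => ℝ) (Fin.last 1)).symm p))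
      ((Set.Ioo (-(1:ℝ)/2) (1/2)) ×ˢ unitCube 1) := by
    rw [← preim]
    exact (hmp.integrableOn_comp_preimage hemb).2 hf
  rw [Measure.volume_eq_prod] at hint ⊢
  rw [setIntegral_prod _ hint]
  congr 1; ext t; congr 1; ext x'; rw [esymm_eq]

lemma cell_eq : cellY 1 = Set.univ.pi
    (fun i : Fin 2 => if i = 1 then Set.Ioo (-(1:ℝ)/2) (1/2) else Set.Ioo 0 1) := by
  ext x
  simp only [cellY, cyl, unitCube, Set.mem_setOf_eq, Set.mem_pi, Set.mem_univ, true_implies]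
  constructor
  · rintro ⟨h1, h2⟩ i
    have h0 := h1 0
    fin_cases i <;> simp_all [Fin.last]
  · intro h
    refine ⟨fun i => ?_, ?_⟩
    · have := h 0; fin_cases i; simpa using this
    · have := h 1; simpa [Fin.last] using this

lemma cell_meas : MeasurableSet (cellY 1) := by
  rw [cell_eq]; exact MeasurableSet.univ_pi fun i => by split <;> exact measurableSet_Ioo

lemma cell_vol : volume (cellY 1) = 1 := by
  rw [cell_eq, volume_pi_pi]
  simp [Fin.prod_univ_succ, Real.volume_Ioo]
  norm_num

lemma cube_meas : MeasurableSet (unitCube 1) :=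
  MeasurableSet.univ_pi fun _ => measurableSet_Ioo

lemma cube_vol : volume (unitCube 1) = 1 := by
  rw [unitCube, volume_pi_pi]; norm_num

lemma cell_subset : cellY 1 ⊆ Set.Icc (fun _ => (-1 : ℝ)) (fun _ => (1 : ℝ)) := by
  intro x hx
  rw [cell_eq] at hx
  have h0 := hx 0 (Set.mem_univ _)
  have h1 := hx 1 (Set.mem_univ _)
  simp at h0 h1
  constructor <;> intro i <;> fin_cases i <;> simp <;> linarith [h0.1, h0.2, h1.1, h1.2]

lemma cube_subset : unitCube 1 ⊆ Set.Icc (fun _ => (0 : ℝ)) (fun _ => (1 : ℝ)) := by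
  intro x hx
  exact ⟨fun i => le_of_lt (hx i (Set.mem_univ _)).1, fun i => le_of_lt (hx i (Set.mem_univ _)).2⟩

lemma integrableOn_cell {f : (Fin 2 → ℝ) → ℝ} (hf : Continuous f) :
    IntegrableOn f (cellY 1) :=
  (hf.continuousOn.integrableOn_compact isCompact_Icc).mono_set cell_subset

lemma integrableOn_cube {f : (Fin 1 → ℝ) → ℝ} (hf : Continuous f) :
    IntegrableOn f (unitCube 1) :=
  (hf.continuousOn.integrableOn_compact isCompact_Icc).mono_set cube_subset

lemma cont_strain {u : (Fin 2 → ℝ) → (Fin 2 → ℝ)} (hu : ContDiff ℝ 1 u) (i j : Fin 2) :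
    Continuous fun x => strain u x i j := by
  have h1 : ∀ m n : Fin 2, Continuous fun x => pd (fun y => u y m) n x := by
    intro m n
    have hm : ContDiff ℝ 1 fun y => u y m := contDiff_pi.1 hu m
    have h2 := hm.continuous_fderiv_apply one_ne_zero
    exact h2.comp (continuous_id.prodMk continuous_const)
  exact ((h1 i j).add (h1 j i)).div_const 2

lemma cont_snoc (t : ℝ) : Continuous fun x' : Fin 1 → ℝ => (Fin.snoc x' t : Fin 2 → ℝ) := by
  refine continuous_pi fun i => ?_
  refine Fin.lastCases ?_ (fun j => ?_) i
  · simp only [Fin.snoc_last]; exact continuous_const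
  · simpa [Fin.snoc_castSucc] using continuous_apply j

lemma cs_integral {X : Type*} [MeasurableSpace X] (μ : Measure X) (f g : X → ℝ)
    (hf2 : Integrable (fun x => f x ^ 2) μ) (hg2 : Integrable (fun x => g x ^ 2) μ)
    (hfg : Integrable (fun x => f x * g x) μ) :
    (∫ x, f x * g x ∂μ) ^ 2 ≤ (∫ x, f x ^ 2 ∂μ) * ∫ x, g x ^ 2 ∂μ := by
  have key : ∀ lam : ℝ, 0 ≤ (∫ x, f x ^ 2 ∂μ) * (lam * lam)
      + (2 * ∫ x, f x * g x ∂μ) * lam + ∫ x, g x ^ 2 ∂μ := by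
    intro lam
    have h0 : 0 ≤ ∫ x, (lam * f x + g x) ^ 2 ∂μ := integral_nonneg fun x => sq_nonneg _
    have he : ∫ x, (lam * f x + g x) ^ 2 ∂μ
        = (∫ x, f x ^ 2 ∂μ) * (lam * lam) + (2 * ∫ x, f x * g x ∂μ) * lam
          + ∫ x, g x ^ 2 ∂μ := by
      have hrw : (fun x => (lam * f x + g x) ^ 2)
          = fun x => (lam * lam) * f x ^ 2 + (2 * lam) * (f x * g x) + g x ^ 2 := by
        funext x; ring
      have ha1 : Integrable (fun x => lam * lam * f x ^ 2) μ := hf2.const_mul _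
      have ha2 : Integrable (fun x => 2 * lam * (f x * g x)) μ := hfg.const_mul _
      rw [hrw]
      have e1 : ∫ x, (lam * lam * f x ^ 2 + 2 * lam * (f x * g x)) + g x ^ 2 ∂μ
          = (∫ x, lam * lam * f x ^ 2 + 2 * lam * (f x * g x) ∂μ) + ∫ x, g x ^ 2 ∂μ :=
        integral_add (ha1.add ha2) hg2
      have e2 : ∫ x, lam * lam * f x ^ 2 + 2 * lam * (f x * g x) ∂μ
          = (∫ x, lam * lam * f x ^ 2 ∂μ) + ∫ x, 2 * lam * (f x * g x) ∂μ :=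
        integral_add ha1 ha2
      rw [e1, e2, integral_const_mul, integral_const_mul]
      ring
    linarith [he ▸ h0]
  have hd := discrim_le_zero key
  rw [discrim] at hd
  nlinarith [hd]

lemma single_sq_le (X : Fin 2 → Fin 2 → ℝ) :
    (X 0 0) ^ 2 ≤ ∑ i : Fin 2, ∑ j : Fin 2, (X i j) ^ 2 := by
  simp only [Fin.sum_univ_two]
  nlinarith [sq_nonneg (X 0 1), sq_nonneg (X 1 0), sq_nonneg (X 1 1)]

lemma swapA {A : (Fin 2 → ℝ) → Fin 2 → Fin 2 → Fin 2 → Fin 2 → ℝ} (hA : tensSym A)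
    (x : Fin 2 → ℝ) (X Y : Fin 2 → Fin 2 → ℝ) :
    (∑ i : Fin 2, ∑ j : Fin 2, (∑ k : Fin 2, ∑ l : Fin 2, A x i j k l * Y k l) * X i j)
      = ∑ i : Fin 2, ∑ j : Fin 2, (∑ k : Fin 2, ∑ l : Fin 2, A x i j k l * X k l) * Y i j := by
  have h : ∀ i j k l, A x i j k l = A x k l i j := fun i j k l => (hA x i j k l).2.2
  simp only [Fin.sum_univ_two]
  linear_combination h 0 0 0 0 * (Y 0 0 * X 0 0) + h 0 0 0 1 * (Y 0 1 * X 0 0) + h 0 0 1 0 * (Y 1 0 * X 0 0) + h 0 0 1 1 * (Y 1 1 * X 0 0) + h 0 1 0 0 * (Y 0 0 * X 0 1) + h 0 1 0 1 * (Y 0 1 * X 0 1) + h 0 1 1 0 * (Y 1 0 * X 0 1) + h 0 1 1 1 * (Y 1 1 * X 0 1) + h 1 0 0 0 * (Y 0 0 * X 1 0) + h 1 0 0 1 * (Y 0 1 * X 1 0) + h 1 0 1 0 * (Y 1 0 * X 1 0) + h 1 0 1 1 * (Y 1 1 * X 1 0) + h 1 1 0 0 * (Y 0 0 * X 1 1)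 + h 1 1 0 1 * (Y 0 1 * X 1 1) + h 1 1 1 0 * (Y 1 0 * X 1 1) + h 1 1 1 1 * (Y 1 1 * X 1 1)


lemma arith_bound {cm cp R P Q X : ℝ} (hcm : 0 < cm) (hcp : 0 < cp) (h6 : cm * R ≤ -P)
    (q3 : P ^ 2 ≤ X * Q) (q4 : X ≤ 1/4) (q5 : Q ≤ cp ^ 2 * R) (hR0 : 0 ≤ R) (hQ0 : 0 ≤ Q)
    (hX0 : 0 ≤ X) : Q ≤ cp ^ 4 / (4 * cm ^ 2) := by
  have hP2 : P ^ 2 ≤ (1/4) * (cp ^ 2 * R) := by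
    refine le_trans q3 ?_
    have := mul_le_mul q4 q5 hQ0 (by norm_num : (0:ℝ) ≤ 1/4)
    linarith
  have hcmR : 0 ≤ cm * R := mul_nonneg hcm.le hR0
  have hsq : (cm * R) ^ 2 ≤ P ^ 2 := by nlinarith [hcmR, h6]
  have hRb : R ≤ cp ^ 2 / (4 * cm ^ 2) := by
    rcases le_or_gt R 0 with h | h
    · have : (0:ℝ) ≤ cp ^ 2 / (4 * cm ^ 2) := by positivity
      linarith
    · have key : (4 * cm ^ 2 * R) * R ≤ cp ^ 2 * R := by nlinarith [hsq, hP2]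
      have h4 := le_of_mul_le_mul_right key h
      rw [le_div_iff₀ (by positivity : (0:ℝ) < 4 * cm ^ 2)]
      linarith
  calc Q ≤ cp ^ 2 * R := q5
    _ ≤ cp ^ 2 * (cp ^ 2 / (4 * cm ^ 2)) := by nlinarith [sq_nonneg cp]
    _ = cp ^ 4 / (4 * cm ^ 2) := by ring

/-- In dimension `d = 2`: for every odd `ξ ∈ L²(-1/2,1/2)` one has
`∫ ξ S*_{αβγδ} = ∫ x_d (T^{*,ξ}_{αβ})_{γδ}`, together with the bound
`‖S*_{αβγδ}‖_{L²(-1/2,1/2)} ≤ c₊²/c₋ + c₊`. -/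
theorem statement18 (cm cp : ℝ) (hcm : 0 < cm) (hcp : 0 < cp)
    (A : (Fin (1 + 1) → ℝ) → Fin (1 + 1) → Fin (1 + 1) → Fin (1 + 1) → Fin (1 + 1) → ℝ)
    (hAc : Continuous A) (hAper : XPeriodic A)
    (hAsym : tensSym A) (hAell : tensElliptic A cm) (hAbd : tensBounded A cp)
    (W : Fin 1 → Fin 1 → (Fin (1 + 1) → ℝ) → (Fin (1 + 1) → ℝ))
    (hW : ∀ α β, ContDiff ℝ 1 (W α β))
    (hWper : ∀ α β, XPeriodic (W α β))
    (hWmean : ∀ (α β : Fin 1) (i : Fin (1 + 1)), (∫ x in cellY 1, W α β x i) = 0)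
    (hWcorr : BendCorr A W)
    (α β γ δ : Fin 1)
    (ξ : ℝ → ℝ) (hξc : Continuous ξ) (hξodd : ∀ t : ℝ, ξ (-t) = - ξ t)
    (hξ2 : Integrable (fun t => (ξ t) ^ 2) (volume.restrict (Set.Ioo (-(1:ℝ)/2) (1/2))))
    (Wxi : (Fin (1 + 1) → ℝ) → (Fin (1 + 1) → ℝ))
    (hWxi : ContDiff ℝ 1 Wxi) (hWxiper : XPeriodic Wxi)
    (hWximean : ∀ i : Fin (1 + 1), (∫ x in cellY 1, Wxi x i) = 0)
    (hWxicorr : ∀ v : (Fin (1 + 1) → ℝ) → (Fin (1 + 1) → ℝ), ContDiff ℝ 1 v → XPeriodic v →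
        (∫ x in cellY 1, ∑ i : Fin (1 + 1), ∑ j : Fin (1 + 1),
          (∑ k : Fin (1 + 1), ∑ l : Fin (1 + 1),
            A x i j k l * (strain Wxi x k l - ξ (x (Fin.last 1)) * membM α β k l))
            * strain v x i j) = 0) :
    (∫ t in Set.Ioo (-(1:ℝ)/2) (1/2), ξ t * Sstar A W α β γ δ t)
      = (∫ t in Set.Ioo (-(1:ℝ)/2) (1/2), t * Txi A Wxi ξ α β γ δ t)
    ∧ Real.sqrt (∫ t in Set.Ioo (-(1:ℝ)/2) (1/2), (Sstar A W α β γ δ t) ^ 2)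
        ≤ cp ^ 2 / cm + cp := by
  obtain rfl : α = 0 := Subsingleton.elim α 0
  obtain rfl : β = 0 := Subsingleton.elim β 0
  obtain rfl : γ = 0 := Subsingleton.elim γ 0
  obtain rfl : δ = 0 := Subsingleton.elim δ 0
  have hAco : ∀ i j k l : Fin 2, Continuous fun x : Fin 2 → ℝ => A x i j k l := fun i j k l =>
    (continuous_apply l).comp ((continuous_apply k).comp ((continuous_apply j).comp
      ((continuous_apply i).comp hAc)))
  have hlast : Continuous fun x : Fin 2 → ℝ => x (Fin.last 1) := continuous_apply _
  set s1 : (Fin 2 → ℝ) → Fin 2 → Fin 2 → ℝ := fun x k l => bendStrain W 0 0 x k l with hs1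
  set s2 : (Fin 2 → ℝ) → Fin 2 → Fin 2 → ℝ :=
    fun x k l => strain Wxi x k l - ξ (x (Fin.last 1)) * membM 0 0 k l with hs2
  set a1 : (Fin 2 → ℝ) → Fin 2 → Fin 2 → ℝ :=
    fun x i j => ∑ k : Fin 2, ∑ l : Fin 2, A x i j k l * s1 x k l with ha1
  set a2 : (Fin 2 → ℝ) → Fin 2 → Fin 2 → ℝ :=
    fun x i j => ∑ k : Fin 2, ∑ l : Fin 2, A x i j k l * s2 x k l with ha2
  have hs1c : ∀ k l, Continuous fun x => s1 x k l := fun k l =>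
    (cont_strain (hW 0 0) k l).sub (hlast.mul continuous_const)
  have hs2c : ∀ k l, Continuous fun x => s2 x k l := fun k l =>
    (cont_strain hWxi k l).sub ((hξc.comp hlast).mul continuous_const)
  have ha1c : ∀ i j, Continuous fun x => a1 x i j := fun i j =>
    continuous_finset_sum _ fun k _ => continuous_finset_sum _ fun l _ =>
      (hAco i j k l).mul (hs1c k l)
  have ha2c : ∀ i j, Continuous fun x => a2 x i j := fun i j =>
    continuous_finset_sum _ fun k _ => continuous_finset_sum _ fun l _ =>
      (hAco i j k l).mul (hs2c k l)
  have hs1sym : ∀ x i j, s1 x i j = s1 x j i := by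
    intro x i j
    simp only [hs1, bendStrain, strain, membM]
    have : (i = Fin.castSucc 0 ∧ j = Fin.castSucc 0) ↔ (j = Fin.castSucc 0 ∧ i = Fin.castSucc 0) :=
      and_comm
    rw [if_congr this rfl rfl]
    ring
  -- corrector identities
  have E1 : ∫ x in cellY 1, ∑ i : Fin 2, ∑ j : Fin 2, a1 x i j * strain Wxi x i j = 0 := by
    have h := hWcorr 0 0 Wxi hWxi hWxiper
    simpa only [ha1, hs1] using h
  have E2 : ∫ x in cellY 1, ∑ i : Fin 2, ∑ j : Fin 2, a2 x i j * strain (W 0 0) x i j = 0 := by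
    have h := hWxicorr (W 0 0) (hW 0 0) (hWper 0 0)
    simpa only [ha2, hs2] using h
  have E0 : ∫ x in cellY 1, ∑ i : Fin 2, ∑ j : Fin 2, a1 x i j * strain (W 0 0) x i j = 0 := by
    have h := hWcorr 0 0 (W 0 0) (hW 0 0) (hWper 0 0)
    simpa only [ha1, hs1] using h
  -- slice representations
  have hSrep : ∀ t : ℝ, Sstar A W 0 0 0 0 t = ∫ x' in unitCube 1, a1 (Fin.snoc x' t) 0 0 := by
    intro t
    simp only [Sstar, ha1, hs1, bendStrain]
    refine integral_congr_ae (Filter.Eventually.of_forall fun x' => ?_)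
    simp [Fin.snoc_last, snoc_one]
  have hTrep : ∀ t : ℝ, Txi A Wxi ξ 0 0 0 0 t = ∫ x' in unitCube 1, a2 (Fin.snoc x' t) 0 0 := by
    intro t
    simp only [Txi, ha2, hs2]
    refine integral_congr_ae (Filter.Eventually.of_forall fun x' => ?_)
    simp [Fin.snoc_last, snoc_one]
  -- integrability
  have i1 : IntegrableOn (fun x => ξ (x (Fin.last 1)) * a1 x 0 0) (cellY 1) :=
    integrableOn_cell ((hξc.comp hlast).mul (ha1c 0 0))
  have i2 : IntegrableOn (fun x => ∑ i : Fin 2, ∑ j : Fin 2, a1 x i j * strain Wxi x i j)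
      (cellY 1) :=
    integrableOn_cell (continuous_finset_sum _ fun i _ => continuous_finset_sum _ fun j _ =>
      (ha1c i j).mul (cont_strain hWxi i j))
  have i3 : IntegrableOn (fun x => ∑ i : Fin 2, ∑ j : Fin 2, a1 x i j * s2 x i j) (cellY 1) :=
    integrableOn_cell (continuous_finset_sum _ fun i _ => continuous_finset_sum _ fun j _ =>
      (ha1c i j).mul (hs2c i j))
  have i4 : IntegrableOn (fun x => ∑ i : Fin 2, ∑ j : Fin 2, a2 x i j * strain (W 0 0) x i j)
      (cellY 1) :=
    integrableOn_cell (continuous_finset_sum _ fun i _ => continuous_finset_sum _ fun j _ =>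
      (ha2c i j).mul (cont_strain (hW 0 0) i j))
  have i5 : IntegrableOn (fun x => x (Fin.last 1) * a2 x 0 0) (cellY 1) :=
    integrableOn_cell (hlast.mul (ha2c 0 0))
  have i6 : IntegrableOn (fun x => ∑ i : Fin 2, ∑ j : Fin 2, a1 x i j * s1 x i j) (cellY 1) :=
    integrableOn_cell (continuous_finset_sum _ fun i _ => continuous_finset_sum _ fun j _ =>
      (ha1c i j).mul (hs1c i j))
  have i7 : IntegrableOn (fun x => x (Fin.last 1) * a1 x 0 0) (cellY 1) :=
    integrableOn_cell (hlast.mul (ha1c 0 0))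
  have i8 : IntegrableOn (fun x => ∑ i : Fin 2, ∑ j : Fin 2, (s1 x i j) ^ 2) (cellY 1) :=
    integrableOn_cell (continuous_finset_sum _ fun i _ => continuous_finset_sum _ fun j _ =>
      (hs1c i j).pow 2)
  have i9 : IntegrableOn (fun x : Fin 2 → ℝ => (x (Fin.last 1)) ^ 2) (cellY 1) :=
    integrableOn_cell (hlast.pow 2)
  have i10 : IntegrableOn (fun x => (a1 x 0 0) ^ 2) (cellY 1) :=
    integrableOn_cell ((ha1c 0 0).pow 2)
  -- pointwise algebra
  have p1 : ∀ x : Fin 2 → ℝ, ξ (x (Fin.last 1)) * a1 x 0 0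
      = (∑ i : Fin 2, ∑ j : Fin 2, a1 x i j * strain Wxi x i j)
        - ∑ i : Fin 2, ∑ j : Fin 2, a1 x i j * s2 x i j := by
    intro x
    simp only [hs2, Fin.sum_univ_two, membM, Fin.castSucc_zero]
    norm_num
    ring
  have p3 : ∀ x : Fin 2 → ℝ, (∑ i : Fin 2, ∑ j : Fin 2, a2 x i j * s1 x i j)
      = (∑ i : Fin 2, ∑ j : Fin 2, a2 x i j * strain (W 0 0) x i j)
        - x (Fin.last 1) * a2 x 0 0 := by
    intro x
    simp only [hs1, bendStrain, Fin.sum_univ_two, membM, Fin.castSucc_zero]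
    norm_num
    ring
  have p4 : ∀ x : Fin 2 → ℝ, (∑ i : Fin 2, ∑ j : Fin 2, a1 x i j * s1 x i j)
      = (∑ i : Fin 2, ∑ j : Fin 2, a1 x i j * strain (W 0 0) x i j)
        - x (Fin.last 1) * a1 x 0 0 := by
    intro x
    simp only [hs1, bendStrain, Fin.sum_univ_two, membM, Fin.castSucc_zero]
    norm_num
    ring
  have p2 : ∀ x : Fin 2 → ℝ, (∑ i : Fin 2, ∑ j : Fin 2, a1 x i j * s2 x i j)
      = ∑ i : Fin 2, ∑ j : Fin 2, a2 x i j * s1 x i j := by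
    intro x
    have h := swapA hAsym x (s2 x) (s1 x)
    simpa only [ha1, ha2] using h
  -- Part 1
  have stepA : (∫ t in Set.Ioo (-(1:ℝ)/2) (1/2), ξ t * Sstar A W 0 0 0 0 t)
      = ∫ x in cellY 1, ξ (x (Fin.last 1)) * a1 x 0 0 := by
    rw [fubini_cell _ i1]
    refine integral_congr_ae (Filter.Eventually.of_forall fun t => ?_)
    dsimp only
    rw [hSrep, ← integral_const_mul]
    refine integral_congr_ae (Filter.Eventually.of_forall fun x' => ?_)
    dsimp only
    simp only [Fin.snoc_last]
  have stepC : (∫ t in Set.Ioo (-(1:ℝ)/2) (1/2), t * Txi A Wxi ξ 0 0 0 0 t)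
      = ∫ x in cellY 1, x (Fin.last 1) * a2 x 0 0 := by
    rw [fubini_cell _ i5]
    refine integral_congr_ae (Filter.Eventually.of_forall fun t => ?_)
    dsimp only
    rw [hTrep, ← integral_const_mul]
    refine integral_congr_ae (Filter.Eventually.of_forall fun x' => ?_)
    dsimp only
    simp only [Fin.snoc_last]
  have stepB : (∫ x in cellY 1, ξ (x (Fin.last 1)) * a1 x 0 0)
      = ∫ x in cellY 1, x (Fin.last 1) * a2 x 0 0 := by
    have e1 : (∫ x in cellY 1, ξ (x (Fin.last 1)) * a1 x 0 0)
        = (∫ x in cellY 1, ∑ i : Fin 2, ∑ j : Fin 2, a1 x i j * strain Wxi x i j)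
          - ∫ x in cellY 1, ∑ i : Fin 2, ∑ j : Fin 2, a1 x i j * s2 x i j := by
      rw [← integral_sub i2 i3]
      exact integral_congr_ae (Filter.Eventually.of_forall fun x => p1 x)
    have e2 : (∫ x in cellY 1, ∑ i : Fin 2, ∑ j : Fin 2, a1 x i j * s2 x i j)
        = ∫ x in cellY 1, ∑ i : Fin 2, ∑ j : Fin 2, a2 x i j * s1 x i j :=
      integral_congr_ae (Filter.Eventually.of_forall fun x => p2 x)
    have e3 : (∫ x in cellY 1, ∑ i : Fin 2, ∑ j : Fin 2, a2 x i j * s1 x i j)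
        = (∫ x in cellY 1, ∑ i : Fin 2, ∑ j : Fin 2, a2 x i j * strain (W 0 0) x i j)
          - ∫ x in cellY 1, x (Fin.last 1) * a2 x 0 0 := by
      rw [← integral_sub i4 i5]
      exact integral_congr_ae (Filter.Eventually.of_forall fun x => p3 x)
    rw [e1, E1, e2, e3, E2]
    ring
  constructor
  · rw [stepA, stepB, ← stepC]
  -- Part 2
  · have q1 : (∫ x in cellY 1, ∑ i : Fin 2, ∑ j : Fin 2, a1 x i j * s1 x i j)
        = - ∫ x in cellY 1, x (Fin.last 1) * a1 x 0 0 := by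
      have e3 : (∫ x in cellY 1, ∑ i : Fin 2, ∑ j : Fin 2, a1 x i j * s1 x i j)
          = (∫ x in cellY 1, ∑ i : Fin 2, ∑ j : Fin 2, a1 x i j * strain (W 0 0) x i j)
            - ∫ x in cellY 1, x (Fin.last 1) * a1 x 0 0 := by
        rw [← integral_sub (integrableOn_cell (f := fun x => ∑ i : Fin 2, ∑ j : Fin 2, a1 x i j * strain (W 0 0) x i j) (continuous_finset_sum _ fun i _ => continuous_finset_sum _ fun j _ => (ha1c i j).mul (cont_strain (hW 0 0) i j))) i7]
        exact integral_congr_ae (Filter.Eventually.of_forall fun x => p4 x)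
      rw [e3, E0]
      ring
    have hell : ∀ x : Fin 2 → ℝ, cm * (∑ i : Fin 2, ∑ j : Fin 2, (s1 x i j) ^ 2)
        ≤ ∑ i : Fin 2, ∑ j : Fin 2, a1 x i j * s1 x i j := by
      intro x
      have h := hAell x (s1 x) (fun i j => hs1sym x i j)
      have e : (∑ i : Fin 2, ∑ j : Fin 2, ∑ k : Fin 2, ∑ l : Fin 2,
          s1 x i j * A x i j k l * s1 x k l)
          = ∑ i : Fin 2, ∑ j : Fin 2, a1 x i j * s1 x i j := by
        simp only [ha1, Fin.sum_univ_two]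
        ring
      exact le_of_le_of_eq h e
    have q2 : cm * (∫ x in cellY 1, ∑ i : Fin 2, ∑ j : Fin 2, (s1 x i j) ^ 2)
        ≤ ∫ x in cellY 1, ∑ i : Fin 2, ∑ j : Fin 2, a1 x i j * s1 x i j := by
      rw [← integral_const_mul]
      exact setIntegral_mono_on (i8.const_mul cm) i6 cell_meas fun x _ => hell x
    have habs : ∀ x : Fin 2 → ℝ, (a1 x 0 0) ^ 2
        ≤ cp ^ 2 * ∑ i : Fin 2, ∑ j : Fin 2, (s1 x i j) ^ 2 := by
      intro x
      have h1 := single_sq_le (a1 x)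
      have h2 := hAbd x (s1 x) (fun i j => hs1sym x i j)
      have e : (∑ i : Fin 2, ∑ j : Fin 2, (a1 x i j) ^ 2)
          = ∑ i : Fin 2, ∑ j : Fin 2,
              (∑ k : Fin 2, ∑ l : Fin 2, A x i j k l * s1 x k l) ^ 2 := by
        simp only [ha1]
      exact le_trans h1 (le_trans (le_of_eq e) h2)
    have q5 : (∫ x in cellY 1, (a1 x 0 0) ^ 2)
        ≤ cp ^ 2 * ∫ x in cellY 1, ∑ i : Fin 2, ∑ j : Fin 2, (s1 x i j) ^ 2 := by
      rw [← integral_const_mul]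
      exact setIntegral_mono_on i10 (i8.const_mul _) cell_meas fun x _ => habs x
    have q4 : (∫ x in cellY 1, (x (Fin.last 1)) ^ 2) ≤ 1/4 := by
      have hc : IntegrableOn (fun _ : Fin 2 → ℝ => (1:ℝ)/4) (cellY 1) := by
        exact integrableOn_const (by rw [cell_vol]; exact ENNReal.one_ne_top)
      have hmono := setIntegral_mono_on i9 hc cell_meas (fun x hx => by
        obtain ⟨-, h2⟩ := hx
        obtain ⟨ha', hb'⟩ := h2
        nlinarith)
      calc (∫ x in cellY 1, (x (Fin.last 1)) ^ 2) ≤ ∫ _ in cellY 1, (1:ℝ)/4 := hmono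
        _ = 1/4 := by rw [setIntegral_const, measureReal_def, cell_vol]; simp
    have q3 : (∫ x in cellY 1, x (Fin.last 1) * a1 x 0 0) ^ 2
        ≤ (∫ x in cellY 1, (x (Fin.last 1)) ^ 2) * ∫ x in cellY 1, (a1 x 0 0) ^ 2 :=
      cs_integral _ _ _ i9 i10 i7
    have hR0 : 0 ≤ ∫ x in cellY 1, ∑ i : Fin 2, ∑ j : Fin 2, (s1 x i j) ^ 2 :=
      setIntegral_nonneg cell_meas fun x _ => by positivity
    have hI0 : 0 ≤ ∫ x in cellY 1, (a1 x 0 0) ^ 2 :=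
      setIntegral_nonneg cell_meas fun x _ => sq_nonneg _
    have hX0 : 0 ≤ ∫ x in cellY 1, (x (Fin.last 1)) ^ 2 :=
      setIntegral_nonneg cell_meas fun x _ => sq_nonneg _
    have h6 : cm * (∫ x in cellY 1, ∑ i : Fin 2, ∑ j : Fin 2, (s1 x i j) ^ 2)
        ≤ - ∫ x in cellY 1, x (Fin.last 1) * a1 x 0 0 := by
      rw [← q1]; exact q2
    have hQb : (∫ x in cellY 1, (a1 x 0 0) ^ 2) ≤ cp ^ 4 / (4 * cm ^ 2) :=
      arith_bound hcm hcp h6 q3 q4 q5 hR0 hI0 hX0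
    have hprod := integrable_prod_of_cell i10
    have hg : Integrable (fun t => ∫ x' in unitCube 1, (a1 (Fin.snoc x' t) 0 0) ^ 2)
        (volume.restrict (Set.Ioo (-(1:ℝ)/2) (1/2))) := hprod.integral_prod_left
    have hpt : ∀ t : ℝ, (Sstar A W 0 0 0 0 t) ^ 2
        ≤ ∫ x' in unitCube 1, (a1 (Fin.snoc x' t) 0 0) ^ 2 := by
      intro t
      have hfc : Continuous fun x' : Fin 1 → ℝ => a1 (Fin.snoc x' t) 0 0 :=
        (ha1c 0 0).comp (cont_snoc t)
      have hcs := cs_integral (volume.restrict (unitCube 1))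
        (fun x' => a1 (Fin.snoc x' t) 0 0) (fun _ => (1:ℝ))
        (integrableOn_cube (hfc.pow 2)) (integrableOn_cube (continuous_const.pow 2))
        (integrableOn_cube (hfc.mul continuous_const))
      have h1' : (∫ x' in unitCube 1, a1 (Fin.snoc x' t) 0 0 * 1)
          = ∫ x' in unitCube 1, a1 (Fin.snoc x' t) 0 0 := by simp
      have h2' : (∫ _ in unitCube 1, ((1:ℝ)) ^ 2) = 1 := by
        rw [setIntegral_const, measureReal_def, cube_vol]; simp
      rw [hSrep]
      calc (∫ x' in unitCube 1, a1 (Fin.snoc x' t) 0 0) ^ 2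
          = (∫ x' in unitCube 1, a1 (Fin.snoc x' t) 0 0 * 1) ^ 2 := by rw [h1']
        _ ≤ (∫ x' in unitCube 1, (a1 (Fin.snoc x' t) 0 0) ^ 2)
            * ∫ _ in unitCube 1, ((1:ℝ)) ^ 2 := hcs
        _ = ∫ x' in unitCube 1, (a1 (Fin.snoc x' t) 0 0) ^ 2 := by rw [h2', mul_one]
    have hmono2 : (∫ t in Set.Ioo (-(1:ℝ)/2) (1/2), (Sstar A W 0 0 0 0 t) ^ 2)
        ≤ ∫ x in cellY 1, (a1 x 0 0) ^ 2 := by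
      rw [fubini_cell _ i10]
      exact integral_mono_of_nonneg (Filter.Eventually.of_forall fun t => sq_nonneg _) hg
        (Filter.Eventually.of_forall fun t => hpt t)
    have hfinal : (∫ t in Set.Ioo (-(1:ℝ)/2) (1/2), (Sstar A W 0 0 0 0 t) ^ 2)
        ≤ (cp ^ 2 / cm + cp) ^ 2 := by
      have e : (cp ^ 2 / cm) ^ 2 = cp ^ 4 / cm ^ 2 := by
        field_simp
      have h2 : cp ^ 4 / (4 * cm ^ 2) ≤ cp ^ 4 / cm ^ 2 := by
        gcongr
        nlinarith [sq_nonneg cm]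
      have h3 : (cp ^ 2 / cm) ^ 2 ≤ (cp ^ 2 / cm + cp) ^ 2 := by
        have hd : (0:ℝ) ≤ cp ^ 2 / cm := by positivity
        nlinarith [hd, hcp]
      rw [e] at h3
      linarith [hmono2, hQb]
    calc Real.sqrt (∫ t in Set.Ioo (-(1:ℝ)/2) (1/2), (Sstar A W 0 0 0 0 t) ^ 2)
        ≤ Real.sqrt ((cp ^ 2 / cm + cp) ^ 2) := Real.sqrt_le_sqrt hfinal
      _ = cp ^ 2 / cm + cp := Real.sqrt_sq (by positivity)
end
end

section
/- The homogenized plate tensor K*_{22}, defined by (K*_{22})_{αβγδ} = ∫_𝒴 A(e(W^{αβ})−x_d e_α⊗e_β):(e(W^{γδ})−x_d e_γ⊗e_δ), satisfies the two-sided bound: for all symmetric (d-1)×(d-1) matrices τ, (c₋/12) τ:τ ≤ K*_{22} τ : τ ≤ c₊(c₊/c₋ + 1) τ:τ, where c₋ and c₊ are the ellipticity and boundedness constants of A. -/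
open MeasureTheory Real

noncomputable section

/-! ### Auxiliary lemmas -/

section Aux

lemma collapse2 {κ₁ κ₂ : Type*} [Fintype κ₁] [Fintype κ₂] (f : κ₁ → κ₂ → ℝ) :
    (∑ a, ∑ b, f a b) = ∑ p : κ₁ × κ₂, f p.1 p.2 := by
  rw [← Finset.univ_product_univ, Finset.sum_product]

lemma sum_swap4 {A B : Type*} [Fintype A] [Fintype B] (g : A → A → B → B → ℝ) :
    ∑ p : A, ∑ q : A, ∑ m : B, ∑ n : B, g p q m n
      = ∑ m : B, ∑ n : B, ∑ p : A, ∑ q : A, g p q m n := by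
  trans ∑ p : A, ∑ m : B, ∑ q : A, ∑ n : B, g p q m n
  · exact Finset.sum_congr rfl fun p _ => Finset.sum_comm
  trans ∑ m : B, ∑ p : A, ∑ q : A, ∑ n : B, g p q m n
  · exact Finset.sum_comm
  refine Finset.sum_congr rfl fun m _ => ?_
  trans ∑ p : A, ∑ n : B, ∑ q : A, g p q m n
  · exact Finset.sum_congr rfl fun p _ => Finset.sum_comm
  exact Finset.sum_comm

lemma point_alg {κ ι : Type*} [Fintype κ] [Fintype ι]
    (a : ι → ι → ℝ) (t : κ → ℝ) (b c : κ → ι → ℝ) :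
    ∑ p : κ, ∑ q : κ, t p * t q * (∑ m : ι, ∑ n : ι, a m n * b p n * c q m)
      = ∑ m : ι, ∑ n : ι, a m n * (∑ p, t p * b p n) * (∑ q, t q * c q m) := by
  trans ∑ p : κ, ∑ q : κ, ∑ m : ι, ∑ n : ι, a m n * (t p * b p n) * (t q * c q m)
  · refine Finset.sum_congr rfl fun p _ => Finset.sum_congr rfl fun q _ => ?_
    rw [Finset.mul_sum]
    refine Finset.sum_congr rfl fun m _ => ?_
    rw [Finset.mul_sum]
    exact Finset.sum_congr rfl fun n _ => by ring
  rw [sum_swap4]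
  refine Finset.sum_congr rfl fun m _ => Finset.sum_congr rfl fun n _ => ?_
  rw [mul_assoc, Finset.sum_mul_sum, Finset.mul_sum]
  refine Finset.sum_congr rfl fun p _ => ?_
  rw [Finset.mul_sum]
  exact Finset.sum_congr rfl fun q _ => by ring

lemma sum2_integral {κ : Type*} [Fintype κ] {X : Type*} [MeasurableSpace X] (μ : Measure X)
    (f : κ → κ → X → ℝ) (hf : ∀ a b, Integrable (f a b) μ) :
    ∑ a : κ, ∑ b : κ, ∫ x, f a b x ∂μ = ∫ x, ∑ a : κ, ∑ b : κ, f a b x ∂μ := by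
  rw [MeasureTheory.integral_finset_sum _
    (fun a _ => integrable_finset_sum _ (fun b _ => hf a b))]
  exact Finset.sum_congr rfl fun a _ => (MeasureTheory.integral_finset_sum _ fun b _ => hf a b).symm

/-! ### The cell as a box -/

def cellB (d : ℕ) (i : Fin (d+1)) : Set ℝ :=
  if i = Fin.last d then Set.Ioo (-(1:ℝ)/2) (1/2) else Set.Ioo 0 1

lemma cellB_meas (d : ℕ) (i : Fin (d+1)) : MeasurableSet (cellB d i) := by
  unfold cellB; split <;> exact measurableSet_Ioo

lemma cellY_eq (d : ℕ) : cellY d = Set.univ.pi (cellB d) := by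
  ext x
  simp only [cellY, cyl, unitCube, Set.mem_setOf_eq, Set.mem_univ_pi, Set.mem_pi, Set.mem_univ,
    forall_true_left, cellB]
  constructor
  · rintro ⟨h1, h2⟩ i
    rcases eq_or_ne i (Fin.last d) with rfl | hne
    · simpa using h2
    · rcases Fin.exists_castSucc_eq.2 hne with ⟨j, rfl⟩
      simpa [hne] using h1 j
  · intro h
    constructor
    · intro j
      have := h j.castSucc
      simpa [Fin.castSucc_lt_last j |>.ne] using this
    · simpa using h (Fin.last d)

lemma integrableOn_cellY {d : ℕ} {F : (Fin (d+1) → ℝ) → ℝ} (hF : Continuous F) :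
    IntegrableOn F (cellY d) := by
  have hsub : cellY d ⊆ Set.univ.pi fun i => Set.Icc (min (-(1:ℝ)/2) 0) (max (1/2) 1) := by
    rw [cellY_eq]
    intro x hx i _
    have := hx i (Set.mem_univ i)
    simp only [cellB] at this
    split at this <;>
      exact ⟨le_trans (by norm_num) this.1.le, le_trans this.2.le (by norm_num)⟩
  refine (hF.continuousOn.integrableOn_compact ?_).mono_set hsub
  exact isCompact_univ_pi fun i => isCompact_Icc

lemma box_fubini {n : ℕ} (B : Fin (n+1) → Set ℝ) (hB : ∀ i, MeasurableSet (B i))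
    (idx : Fin (n+1)) (F : (Fin (n+1) → ℝ) → ℝ)
    (hF : IntegrableOn F (Set.univ.pi B)) :
    ∫ x in Set.univ.pi B, F x
      = ∫ y in Set.univ.pi (fun j => B (idx.succAbove j)),
          ∫ t in B idx, F (idx.insertNth t y) := by
  have hmp := measurePreserving_piFinSuccAbove (fun _ : Fin (n+1) => (volume : Measure ℝ)) idx
  set e := MeasurableEquiv.piFinSuccAbove (fun _ : Fin (n+1) => ℝ) idx with he
  have hsymm : ∀ (t : ℝ) (y : Fin n → ℝ), e.symm (t, y) = idx.insertNth t y := by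
    intro t y
    simp [he, MeasurableEquiv.piFinSuccAbove_symm_apply, Fin.insertNthEquiv]
  have hpre : e ⁻¹' ((B idx) ×ˢ Set.univ.pi (fun j => B (idx.succAbove j)))
      = Set.univ.pi B := by
    ext x
    simp only [Set.mem_preimage, Set.mem_prod, Set.mem_univ_pi, he,
      MeasurableEquiv.piFinSuccAbove_apply]
    constructor
    · rintro ⟨h1, h2⟩ i
      rcases eq_or_ne i idx with rfl | hne
      · exact h1
      · rcases Fin.exists_succAbove_eq hne with ⟨j, rfl⟩
        exact h2 j
    · intro h; exact ⟨h idx, fun j => h _⟩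
  have hS : MeasurableSet ((B idx) ×ˢ Set.univ.pi (fun j => B (idx.succAbove j))) :=
    (hB idx).prod (MeasurableSet.univ_pi fun j => hB _)
  have h1 : ∫ x in Set.univ.pi B, F x
      = ∫ z in (B idx) ×ˢ Set.univ.pi (fun j => B (idx.succAbove j)), F (e.symm z)
          ∂((volume : Measure ℝ).prod (Measure.pi fun _ : Fin n => (volume : Measure ℝ))) := by
    rw [← hpre]
    have := hmp.setIntegral_preimage_emb e.measurableEmbedding (fun z => F (e.symm z))
      ((B idx) ×ˢ Set.univ.pi (fun j => B (idx.succAbove j)))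
    rw [MeasureTheory.volume_pi]
    rw [← this]
    exact setIntegral_congr_fun (by rw [hpre]; exact MeasurableSet.univ_pi hB)
      (fun x _ => by simp)
  have hint : Integrable (fun z => F (e.symm z))
      (((volume : Measure ℝ).restrict (B idx)).prod
        ((Measure.pi fun _ : Fin n => (volume : Measure ℝ)).restrict
          (Set.univ.pi (fun j => B (idx.succAbove j))))) := by
    rw [Measure.prod_restrict]
    have hres := hmp.restrict_preimage hS
    rw [hpre] at hres
    refine (hres.integrable_comp_emb e.measurableEmbedding
      (g := fun z => F (e.symm z))).1 ?_
    rw [MeasureTheory.volume_pi] at hF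
    exact hF.congr (Filter.Eventually.of_forall fun x => by simp)
  rw [h1, ← Measure.prod_restrict, MeasureTheory.integral_prod _ hint]
  rw [MeasureTheory.integral_integral_swap hint]
  refine setIntegral_congr_fun (MeasurableSet.univ_pi fun j => hB _) fun y _ => ?_
  refine setIntegral_congr_fun (hB idx) fun t _ => ?_
  rw [hsymm]

lemma pd_continuous {n : ℕ} {f : (Fin n → ℝ) → ℝ} (hf : ContDiff ℝ 1 f) (i : Fin n) :
    Continuous (pd f i) :=
  (hf.continuous_fderiv one_ne_zero).clm_apply continuous_const

lemma insertNth_eq_update {n : ℕ} (idx : Fin (n+1)) (t : ℝ) (y : Fin n → ℝ) :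
    (idx.insertNth t y : Fin (n+1) → ℝ)
      = Function.update (idx.insertNth 0 y) idx t := by
  funext j
  rcases eq_or_ne j idx with rfl | hne
  · simp [Fin.insertNth_apply_same]
  · rcases Fin.exists_succAbove_eq hne with ⟨k, rfl⟩
    rw [Function.update_of_ne (idx.succAbove_ne k), Fin.insertNth_apply_succAbove,
      Fin.insertNth_apply_succAbove]

lemma ftc_periodic {d : ℕ} {f : (Fin (d+1) → ℝ) → ℝ} (hf : ContDiff ℝ 1 f)
    (hper : XPeriodic f) (i : Fin d) (x₀ : Fin (d+1) → ℝ) :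
    (∫ t in Set.Ioo (0:ℝ) 1, pd f i.castSucc (Function.update x₀ i.castSucc t)) = 0 := by
  set idx := i.castSucc with hidx
  set v : Fin (d+1) → ℝ := Pi.single idx 1 with hv
  set c : Fin (d+1) → ℝ := Function.update x₀ idx 0 with hc
  have hupd : ∀ t : ℝ, Function.update x₀ idx t = c + t • v := by
    intro t; funext j
    rcases eq_or_ne j idx with rfl | hne
    · simp [hc, hv]
    · simp [hc, hv, Function.update_of_ne hne, Pi.single_eq_of_ne hne]
  have hderiv : ∀ t : ℝ, HasDerivAt (fun s => f (Function.update x₀ idx s))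
      (pd f idx (Function.update x₀ idx t)) t := by
    intro t
    have hφ : HasDerivAt (fun s : ℝ => c + s • v) v t := by
      simpa using ((hasDerivAt_id t).smul_const v).const_add c
    have hfd : HasFDerivAt f (fderiv ℝ f (c + t • v)) (c + t • v) :=
      (hf.differentiable one_ne_zero).differentiableAt.hasFDerivAt
    have := hfd.comp_hasDerivAt t hφ
    simp only [← hupd] at this
    simpa [pd, hv, Function.comp_def] using this
  have hcont : Continuous fun t : ℝ => pd f idx (Function.update x₀ idx t) := by
    refine (pd_continuous hf idx).comp ?_
    have : Continuous fun t : ℝ => c + t • v :=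
      continuous_const.add (continuous_id.smul continuous_const)
    simpa only [← funext hupd] using this
  have hftc : (∫ t in (0:ℝ)..1, pd f idx (Function.update x₀ idx t))
      = f (Function.update x₀ idx 1) - f (Function.update x₀ idx 0) :=
    intervalIntegral.integral_eq_sub_of_hasDerivAt (fun t _ => hderiv t)
      (hcont.intervalIntegrable 0 1)
  have hper0 : f (Function.update x₀ idx 1) = f (Function.update x₀ idx 0) := by
    have heq : Function.update x₀ idx 1 = Function.update x₀ idx 0 + Pi.single idx 1 := by
      funext j
      rcases eq_or_ne j idx with rfl | hne
      · simp
      · simp [Function.update_of_ne hne, Pi.single_eq_of_ne hne]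
    rw [heq, hidx, hper]
  rw [← MeasureTheory.integral_Ioc_eq_integral_Ioo,
    ← intervalIntegral.integral_of_le (by norm_num : (0:ℝ) ≤ 1), hftc, hper0, sub_self]

/-- The key orthogonality: `∫_𝒴 x_d ∂_α f = 0` for `f` periodic and `α` planar. -/
lemma orth_xd_pd {d : ℕ} {f : (Fin (d+1) → ℝ) → ℝ} (hf : ContDiff ℝ 1 f)
    (hper : XPeriodic f) (i : Fin d) :
    ∫ x in cellY d, x (Fin.last d) * pd f i.castSucc x = 0 := by
  have hcontF : Continuous fun x : Fin (d+1) → ℝ => x (Fin.last d) * pd f i.castSucc x :=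
    (continuous_apply _).mul (pd_continuous hf _)
  have hint := integrableOn_cellY (d := d) hcontF
  rw [cellY_eq] at hint ⊢
  rw [box_fubini (cellB d) (cellB_meas d) i.castSucc _ hint]
  have hBi : cellB d i.castSucc = Set.Ioo (0:ℝ) 1 := by
    simp [cellB, (Fin.castSucc_lt_last i).ne]
  have hinner : ∀ y : Fin d → ℝ,
      (∫ t in cellB d i.castSucc,
        ((i.castSucc.insertNth t y : Fin (d+1) → ℝ) (Fin.last d))
          * pd f i.castSucc (i.castSucc.insertNth t y) : ℝ) = 0 := by
    intro y
    set x₀ : Fin (d+1) → ℝ := i.castSucc.insertNth 0 y with hx₀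
    have h1 : ∀ t : ℝ, (i.castSucc.insertNth t y : Fin (d+1) → ℝ)
        = Function.update x₀ i.castSucc t := fun t => insertNth_eq_update _ t y
    have h2 : ∀ t : ℝ, ((i.castSucc.insertNth t y : Fin (d+1) → ℝ)) (Fin.last d)
        = x₀ (Fin.last d) := by
      intro t
      rw [h1, Function.update_of_ne (Ne.symm (Fin.castSucc_lt_last i).ne)]
    calc (∫ t in cellB d i.castSucc,
          ((i.castSucc.insertNth t y : Fin (d+1) → ℝ) (Fin.last d))
            * pd f i.castSucc (i.castSucc.insertNth t y) : ℝ)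
        = ∫ t in Set.Ioo (0:ℝ) 1,
            x₀ (Fin.last d) * pd f i.castSucc (Function.update x₀ i.castSucc t) := by
          rw [hBi]
          refine setIntegral_congr_fun measurableSet_Ioo fun t _ => ?_
          rw [h2, h1]
      _ = x₀ (Fin.last d)
            * ∫ t in Set.Ioo (0:ℝ) 1, pd f i.castSucc (Function.update x₀ i.castSucc t) :=
          MeasureTheory.integral_const_mul _ _
      _ = 0 := by rw [ftc_periodic hf hper i x₀, mul_zero]
  calc (∫ y in Set.univ.pi fun j => cellB d (i.castSucc.succAbove j),
        ∫ t in cellB d i.castSucc,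
          ((i.castSucc.insertNth t y : Fin (d+1) → ℝ) (Fin.last d))
            * pd f i.castSucc (i.castSucc.insertNth t y) : ℝ)
      = ∫ y in Set.univ.pi fun j => cellB d (i.castSucc.succAbove j), (0:ℝ) := by
        refine setIntegral_congr_fun (MeasurableSet.univ_pi fun j => cellB_meas d _)
          fun y _ => hinner y
    _ = 0 := by simp

/-- `∫_𝒴 x_d² = 1/12`. -/
lemma integral_xd_sq (d : ℕ) :
    ∫ x in cellY d, (x (Fin.last d))^2 = 1/12 := by
  have hint : IntegrableOn (fun x : Fin (d+1) → ℝ => (x (Fin.last d))^2) (cellY d) :=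
    integrableOn_cellY (((continuous_apply _).pow 2))
  rw [cellY_eq] at hint ⊢
  rw [box_fubini (cellB d) (cellB_meas d) (Fin.last d) _ hint]
  have hinner : ∀ y : Fin d → ℝ,
      (∫ t in cellB d (Fin.last d),
        ((((Fin.last d).insertNth t y : Fin (d+1) → ℝ)) (Fin.last d))^2 : ℝ) = 1/12 := by
    intro y
    simp only [Fin.insertNth_apply_same, cellB, if_true, eq_self_iff_true]
    rw [← MeasureTheory.integral_Ioc_eq_integral_Ioo,
      ← intervalIntegral.integral_of_le (by norm_num : (-(1:ℝ)/2) ≤ 1/2)]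
    rw [integral_pow]
    norm_num
  simp only [hinner]
  have hB : ∀ j : Fin d, cellB d ((Fin.last d).succAbove j) = Set.Ioo 0 1 := by
    intro j
    rw [Fin.succAbove_last]
    simp [cellB, (Fin.castSucc_lt_last j).ne]
  rw [setIntegral_const]
  have hvol : volume (Set.univ.pi fun j : Fin d => cellB d ((Fin.last d).succAbove j)) = 1 := by
    rw [volume_pi_pi]
    have : ∀ j : Fin d, volume (cellB d ((Fin.last d).succAbove j)) = 1 := by
      intro j; rw [hB j, Real.volume_Ioo]; norm_num
    rw [Fin.succAbove_last] at this ⊢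
    simp [this]
  rw [measureReal_def, hvol]
  simp

lemma collapse4 {κ₁ κ₂ κ₃ κ₄ : Type*} [Fintype κ₁] [Fintype κ₂] [Fintype κ₃] [Fintype κ₄]
    (g : κ₁ → κ₂ → κ₃ → κ₄ → ℝ) :
    (∑ i, ∑ j, ∑ k, ∑ l, g i j k l)
      = ∑ m : κ₁ × κ₂, ∑ n : κ₃ × κ₄, g m.1 m.2 n.1 n.2 := by
  rw [collapse2 (f := fun i j => ∑ k, ∑ l, g i j k l)]
  exact Finset.sum_congr rfl fun m _ => collapse2 _

lemma contA {d : ℕ}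
    {A : (Fin (d+1) → ℝ) → Fin (d+1) → Fin (d+1) → Fin (d+1) → Fin (d+1) → ℝ}
    (hAc : Continuous A) (i j k l : Fin (d+1)) : Continuous fun x => A x i j k l :=
  (continuous_apply l).comp <| (continuous_apply k).comp <| (continuous_apply j).comp <|
    (continuous_apply i).comp hAc

lemma contDiff_comp_proj {d : ℕ} {u : (Fin (d+1) → ℝ) → (Fin (d+1) → ℝ)}
    (hu : ContDiff ℝ 1 u) (k : Fin (d+1)) : ContDiff ℝ 1 fun y => u y k :=
  (ContinuousLinearMap.proj k : (Fin (d+1) → ℝ) →L[ℝ] ℝ).contDiff.comp hu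

lemma strain_continuous {d : ℕ} {u : (Fin (d+1) → ℝ) → (Fin (d+1) → ℝ)}
    (hu : ContDiff ℝ 1 u) (i j : Fin (d+1)) : Continuous fun x => strain u x i j := by
  unfold strain
  exact ((pd_continuous (contDiff_comp_proj hu i) j).add
    (pd_continuous (contDiff_comp_proj hu j) i)).div_const 2

lemma strain_symm {d : ℕ} (u : (Fin (d+1) → ℝ) → (Fin (d+1) → ℝ)) (x : Fin (d+1) → ℝ)
    (i j : Fin (d+1)) : strain u x i j = strain u x j i := by
  unfold strain; rw [add_comm]

/-! ### Contracted tensor fields -/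

def aT {d : ℕ} (A : (Fin (d+1) → ℝ) → Fin (d+1) → Fin (d+1) → Fin (d+1) → Fin (d+1) → ℝ)
    (x : Fin (d+1) → ℝ) (m n : Fin (d+1) × Fin (d+1)) : ℝ := A x m.1 m.2 n.1 n.2

def tMat {d : ℕ} (τ : Fin d → Fin d → ℝ) (m : Fin (d+1) × Fin (d+1)) : ℝ :=
  ∑ p : Fin d × Fin d, τ p.1 p.2 * membM p.1 p.2 m.1 m.2

def sSf {d : ℕ} (W : Fin d → Fin d → (Fin (d+1) → ℝ) → (Fin (d+1) → ℝ))
    (τ : Fin d → Fin d → ℝ) (x : Fin (d+1) → ℝ) (m : Fin (d+1) × Fin (d+1)) : ℝ :=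
  ∑ p : Fin d × Fin d, τ p.1 p.2 * strain (W p.1 p.2) x m.1 m.2

def bSf {d : ℕ} (W : Fin d → Fin d → (Fin (d+1) → ℝ) → (Fin (d+1) → ℝ))
    (τ : Fin d → Fin d → ℝ) (x : Fin (d+1) → ℝ) (m : Fin (d+1) × Fin (d+1)) : ℝ :=
  ∑ p : Fin d × Fin d, τ p.1 p.2 * bendStrain W p.1 p.2 x m.1 m.2

lemma bSf_eq {d : ℕ} (W : Fin d → Fin d → (Fin (d+1) → ℝ) → (Fin (d+1) → ℝ))
    (τ : Fin d → Fin d → ℝ) (x : Fin (d+1) → ℝ) (m : Fin (d+1) × Fin (d+1)) :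
    bSf W τ x m = sSf W τ x m - x (Fin.last d) * tMat τ m := by
  unfold bSf sSf tMat bendStrain
  rw [Finset.mul_sum, ← Finset.sum_sub_distrib]
  exact Finset.sum_congr rfl fun p _ => by ring

lemma tMat_castSucc {d : ℕ} (τ : Fin d → Fin d → ℝ) (α β : Fin d) :
    tMat τ (α.castSucc, β.castSucc) = τ α β := by
  unfold tMat membM
  rw [Finset.sum_eq_single (α, β)]
  · simp
  · rintro ⟨a, b⟩ _ hne
    have : ¬(α.castSucc = a.castSucc ∧ β.castSucc = b.castSucc) := by
      rintro ⟨h1, h2⟩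
      exact hne (Prod.ext (Fin.castSucc_inj.mp h1.symm).symm (Fin.castSucc_inj.mp h2.symm).symm).symm
    simp only [this, if_false, mul_zero]
  · intro h; exact absurd (Finset.mem_univ _) h

lemma tMat_last₁ {d : ℕ} (τ : Fin d → Fin d → ℝ) (j : Fin (d+1)) :
    tMat τ (Fin.last d, j) = 0 := by
  unfold tMat membM
  refine Finset.sum_eq_zero fun p _ => ?_
  have : ¬((Fin.last d : Fin (d+1)) = p.1.castSucc ∧ j = p.2.castSucc) := by
    rintro ⟨h1, -⟩; exact (Fin.castSucc_lt_last p.1).ne h1.symm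
  simp [this]

lemma tMat_last₂ {d : ℕ} (τ : Fin d → Fin d → ℝ) (i : Fin (d+1)) :
    tMat τ (i, Fin.last d) = 0 := by
  unfold tMat membM
  refine Finset.sum_eq_zero fun p _ => ?_
  have : ¬(i = p.1.castSucc ∧ (Fin.last d : Fin (d+1)) = p.2.castSucc) := by
    rintro ⟨-, h2⟩; exact (Fin.castSucc_lt_last p.2).ne h2.symm
  simp [this]

lemma tMat_symm {d : ℕ} {τ : Fin d → Fin d → ℝ} (hτ : ∀ α β, τ α β = τ β α)
    (i j : Fin (d+1)) : tMat τ (i, j) = tMat τ (j, i) := by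
  induction i using Fin.lastCases with
  | last => rw [tMat_last₁, tMat_last₂]
  | cast α =>
    induction j using Fin.lastCases with
    | last => rw [tMat_last₁, tMat_last₂]
    | cast β => rw [tMat_castSucc, tMat_castSucc, hτ]

lemma tMat_sq_sum {d : ℕ} (τ : Fin d → Fin d → ℝ) :
    ∑ m : Fin (d+1) × Fin (d+1), (tMat τ m)^2
      = ∑ α : Fin d, ∑ β : Fin d, (τ α β)^2 := by
  rw [← collapse2 (f := fun i j => (tMat τ (i, j))^2)]
  rw [Fin.sum_univ_castSucc]
  have hlast : (∑ j : Fin (d+1), (tMat τ (Fin.last d, j))^2) = 0 := by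
    refine Finset.sum_eq_zero fun j _ => ?_
    rw [tMat_last₁]; ring
  rw [hlast, add_zero]
  refine Finset.sum_congr rfl fun α _ => ?_
  rw [Fin.sum_univ_castSucc, tMat_last₂]
  simp only [tMat_castSucc]
  norm_num

/-- Key bilinear collapsing identity: sums of integrals of contracted energies. -/
lemma bilin {d : ℕ}
    {A : (Fin (d+1) → ℝ) → Fin (d+1) → Fin (d+1) → Fin (d+1) → Fin (d+1) → ℝ}
    (hAc : Continuous A) (τ : Fin d → Fin d → ℝ)
    (u v : (Fin d × Fin d) → (Fin (d+1) → ℝ) → (Fin (d+1) × Fin (d+1)) → ℝ)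
    (hu : ∀ p n, Continuous fun x => u p x n) (hv : ∀ q m, Continuous fun x => v q x m) :
    ∑ p : Fin d × Fin d, ∑ q : Fin d × Fin d, τ p.1 p.2 * τ q.1 q.2 *
        ∫ x in cellY d, ∑ m : Fin (d+1) × Fin (d+1), ∑ n : Fin (d+1) × Fin (d+1),
          aT A x m n * u p x n * v q x m
      = ∫ x in cellY d, ∑ m : Fin (d+1) × Fin (d+1), ∑ n : Fin (d+1) × Fin (d+1),
          aT A x m n * (∑ p : Fin d × Fin d, τ p.1 p.2 * u p x n)
            * (∑ q : Fin d × Fin d, τ q.1 q.2 * v q x m) := by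
  have hcA : ∀ m n : Fin (d+1) × Fin (d+1), Continuous fun x => aT A x m n :=
    fun m n => contA hAc m.1 m.2 n.1 n.2
  have hint : ∀ p q : Fin d × Fin d,
      Integrable (fun x => τ p.1 p.2 * τ q.1 q.2 *
        ∑ m : Fin (d+1) × Fin (d+1), ∑ n : Fin (d+1) × Fin (d+1),
          aT A x m n * u p x n * v q x m) (volume.restrict (cellY d)) := by
    intro p q
    refine integrableOn_cellY (continuous_const.mul ?_)
    exact continuous_finset_sum _ fun m _ => continuous_finset_sum _ fun n _ =>
      ((hcA m n).mul (hu p n)).mul (hv q m)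
  calc ∑ p : Fin d × Fin d, ∑ q : Fin d × Fin d, τ p.1 p.2 * τ q.1 q.2 *
        ∫ x in cellY d, ∑ m : Fin (d+1) × Fin (d+1), ∑ n : Fin (d+1) × Fin (d+1),
          aT A x m n * u p x n * v q x m
      = ∑ p : Fin d × Fin d, ∑ q : Fin d × Fin d,
          ∫ x in cellY d, τ p.1 p.2 * τ q.1 q.2 *
            ∑ m : Fin (d+1) × Fin (d+1), ∑ n : Fin (d+1) × Fin (d+1),
              aT A x m n * u p x n * v q x m := by
        exact Finset.sum_congr rfl fun p _ => Finset.sum_congr rfl fun q _ =>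
          (MeasureTheory.integral_const_mul _ _).symm
    _ = ∫ x in cellY d, ∑ p : Fin d × Fin d, ∑ q : Fin d × Fin d,
          τ p.1 p.2 * τ q.1 q.2 *
            ∑ m : Fin (d+1) × Fin (d+1), ∑ n : Fin (d+1) × Fin (d+1),
              aT A x m n * u p x n * v q x m :=
        sum2_integral _ _ hint
    _ = _ := by
        refine setIntegral_congr_fun (by rw [cellY_eq]; exact MeasurableSet.univ_pi (cellB_meas d))
          fun x _ => ?_
        exact point_alg (aT A x) (fun p : Fin d × Fin d => τ p.1 p.2)
          (fun p n => u p x n) (fun q m => v q x m)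

end Aux

/-- Two-sided bound on the homogenized bending tensor:
`(c₋/12) τ:τ ≤ K*₂₂ τ : τ ≤ c₊(c₊/c₋ + 1) τ:τ` for all symmetric planar matrices `τ`. -/
theorem statement19 (d : ℕ) (cm cp : ℝ) (hcm : 0 < cm) (hcp : 0 < cp)
    (A : (Fin (d + 1) → ℝ) → Fin (d + 1) → Fin (d + 1) → Fin (d + 1) → Fin (d + 1) → ℝ)
    (hAc : Continuous A) (hAper : XPeriodic A)
    (hAsym : tensSym A) (hAell : tensElliptic A cm) (hAbd : tensBounded A cp)
    (W : Fin d → Fin d → (Fin (d + 1) → ℝ) → (Fin (d + 1) → ℝ))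
    (hW : ∀ α β, ContDiff ℝ 1 (W α β))
    (hWper : ∀ α β, XPeriodic (W α β))
    (hWmean : ∀ (α β : Fin d) (i : Fin (d + 1)), (∫ x in cellY d, W α β x i) = 0)
    (hWint : ∀ α β, Integrable
        (fun x => ∑ i : Fin (d + 1), ∑ j : Fin (d + 1), (strain (W α β) x i j) ^ 2)
        (volume.restrict (cellY d)))
    (hWcorr : BendCorr A W) :
    ∀ τ : Fin d → Fin d → ℝ, (∀ α β, τ α β = τ β α) →
      (cm / 12) * (∑ α : Fin d, ∑ β : Fin d, (τ α β) ^ 2)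
          ≤ (∑ α : Fin d, ∑ β : Fin d, ∑ γ : Fin d, ∑ δ : Fin d,
              τ α β * τ γ δ * K22 A W α β γ δ)
      ∧ (∑ α : Fin d, ∑ β : Fin d, ∑ γ : Fin d, ∑ δ : Fin d,
              τ α β * τ γ δ * K22 A W α β γ δ)
          ≤ cp * (cp / cm + 1) * (∑ α : Fin d, ∑ β : Fin d, (τ α β) ^ 2) := by
  intro τ hτ
  classical
  have hmeasY : MeasurableSet (cellY d) := by
    rw [cellY_eq]; exact MeasurableSet.univ_pi (cellB_meas d)
  -- continuity inventory
  have hcA : ∀ m n : Fin (d+1) × Fin (d+1), Continuous fun x => aT A x m n :=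
    fun m n => contA hAc m.1 m.2 n.1 n.2
  have hcs : ∀ (p : Fin d × Fin d) (m : Fin (d+1) × Fin (d+1)),
      Continuous fun x => strain (W p.1 p.2) x m.1 m.2 :=
    fun p m => strain_continuous (hW p.1 p.2) m.1 m.2
  have hcb : ∀ (p : Fin d × Fin d) (m : Fin (d+1) × Fin (d+1)),
      Continuous fun x => bendStrain W p.1 p.2 x m.1 m.2 := by
    intro p m
    unfold bendStrain
    exact (hcs p m).sub ((continuous_apply _).mul continuous_const)
  have hcsS : ∀ m : Fin (d+1) × Fin (d+1), Continuous fun x => sSf W τ x m :=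
    fun m => continuous_finset_sum _ fun p _ => continuous_const.mul (hcs p m)
  have hcbS : ∀ m : Fin (d+1) × Fin (d+1), Continuous fun x => bSf W τ x m :=
    fun m => continuous_finset_sum _ fun p _ => continuous_const.mul (hcb p m)
  have hXcomp : ∀ (p : Fin d × Fin d) (k : Fin (d+1)),
      XPeriodic fun y => W p.1 p.2 y k := by
    intro p k x i
    exact congrFun (hWper p.1 p.2 x i) k
  -- symmetry of fields
  have hsSsym : ∀ (x : Fin (d+1) → ℝ) (i j : Fin (d+1)),
      sSf W τ x (i, j) = sSf W τ x (j, i) := by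
    intro x i j
    exact Finset.sum_congr rfl fun p _ => by rw [strain_symm]
  have hbSsym : ∀ (x : Fin (d+1) → ℝ) (i j : Fin (d+1)),
      bSf W τ x (i, j) = bSf W τ x (j, i) := by
    intro x i j
    rw [bSf_eq, bSf_eq]
    have h1 : tMat τ (i, j) = tMat τ (j, i) := tMat_symm hτ i j
    have h2 : sSf W τ x (i, j) = sSf W τ x (j, i) := hsSsym x i j
    rw [h1, h2]
  -- pointwise ellipticity / coercivity in contracted form
  have hellpt : ∀ (x : Fin (d+1) → ℝ) (u : Fin (d+1) × Fin (d+1) → ℝ),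
      (∀ i j, u (i, j) = u (j, i)) →
      cm * ∑ m : Fin (d+1) × Fin (d+1), (u m)^2
        ≤ ∑ m : Fin (d+1) × Fin (d+1), ∑ n : Fin (d+1) × Fin (d+1), aT A x m n * u n * u m := by
    intro x u hsym
    have h := hAell x (fun i j => u (i, j)) hsym
    refine le_trans (le_of_eq ?_) (le_trans h (le_of_eq ?_))
    · rw [collapse2 (f := fun i j => (u (i, j))^2)]
    · rw [collapse4 (g := fun i j k l => u (i, j) * A x i j k l * u (k, l))]
      simp only [Prod.mk.eta]
      exact Finset.sum_congr rfl fun m _ => Finset.sum_congr rfl fun n _ => by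
        unfold aT; ring
  -- pointwise boundedness in contracted form (with Cauchy–Schwarz)
  have hbdpt : ∀ x : Fin (d+1) → ℝ,
      (∑ m : Fin (d+1) × Fin (d+1), ∑ n : Fin (d+1) × Fin (d+1),
          aT A x m n * tMat τ n * tMat τ m)
        ≤ cp * ∑ m : Fin (d+1) × Fin (d+1), (tMat τ m)^2 := by
    intro x
    have hb := hAbd x (fun i j => tMat τ (i, j)) (tMat_symm hτ)
    have hb' : (∑ m : Fin (d+1) × Fin (d+1), (∑ n : Fin (d+1) × Fin (d+1),
          aT A x m n * tMat τ n)^2)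
        ≤ cp^2 * ∑ m : Fin (d+1) × Fin (d+1), (tMat τ m)^2 := by
      refine le_trans (le_of_eq ?_) (le_trans hb (le_of_eq ?_))
      · rw [collapse2 (f := fun i j => (∑ k, ∑ l, A x i j k l * tMat τ (k, l))^2)]
        refine (Finset.sum_congr rfl fun m _ => ?_).symm
        congr 1
        rw [collapse2 (f := fun k l => A x m.1 m.2 k l * tMat τ (k, l))]
        exact Finset.sum_congr rfl fun n _ => by rw [Prod.mk.eta]; rfl
      · rw [collapse2 (f := fun i j => (tMat τ (i, j))^2)]
    have hL : (∑ m : Fin (d+1) × Fin (d+1), ∑ n : Fin (d+1) × Fin (d+1),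
          aT A x m n * tMat τ n * tMat τ m)
        = ∑ m : Fin (d+1) × Fin (d+1), (∑ n : Fin (d+1) × Fin (d+1),
            aT A x m n * tMat τ n) * tMat τ m :=
      Finset.sum_congr rfl fun m _ => (Finset.sum_mul _ _ _).symm
    rw [hL]
    set L := ∑ m : Fin (d+1) × Fin (d+1), (∑ n : Fin (d+1) × Fin (d+1),
        aT A x m n * tMat τ n) * tMat τ m with hLdef
    set S := ∑ m : Fin (d+1) × Fin (d+1), (tMat τ m)^2 with hSdef
    have hS0 : 0 ≤ S := Finset.sum_nonneg fun m _ => sq_nonneg _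
    have hCS := Finset.sum_mul_sq_le_sq_mul_sq Finset.univ
      (fun m : Fin (d+1) × Fin (d+1) => ∑ n : Fin (d+1) × Fin (d+1), aT A x m n * tMat τ n)
      (fun m => tMat τ m)
    have hL2 : L^2 ≤ (cp * S)^2 := by
      calc L^2 ≤ (∑ m : Fin (d+1) × Fin (d+1), (∑ n : Fin (d+1) × Fin (d+1),
            aT A x m n * tMat τ n)^2) * S := hCS
        _ ≤ (cp^2 * S) * S := by
            refine mul_le_mul_of_nonneg_right hb' hS0
        _ = (cp * S)^2 := by ring
    nlinarith [mul_nonneg hcp.le hS0, sq_nonneg (L - cp * S), sq_nonneg (L + cp * S)]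
  -- Q as a single integral of the contracted quadratic form
  have hK22c : ∀ p q : Fin d × Fin d, K22 A W p.1 p.2 q.1 q.2
      = ∫ x in cellY d, ∑ m : Fin (d+1) × Fin (d+1), ∑ n : Fin (d+1) × Fin (d+1),
          aT A x m n * bendStrain W p.1 p.2 x n.1 n.2 * bendStrain W q.1 q.2 x m.1 m.2 := by
    intro p q
    refine setIntegral_congr_fun hmeasY fun x _ => ?_
    exact collapse4 (g := fun i j k l =>
      A x i j k l * bendStrain W p.1 p.2 x k l * bendStrain W q.1 q.2 x i j)
  have hQ : (∑ α : Fin d, ∑ β : Fin d, ∑ γ : Fin d, ∑ δ : Fin d,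
        τ α β * τ γ δ * K22 A W α β γ δ)
      = ∫ x in cellY d, ∑ m : Fin (d+1) × Fin (d+1), ∑ n : Fin (d+1) × Fin (d+1),
          aT A x m n * bSf W τ x n * bSf W τ x m := by
    rw [collapse4 (g := fun α β γ δ => τ α β * τ γ δ * K22 A W α β γ δ)]
    calc ∑ p : Fin d × Fin d, ∑ q : Fin d × Fin d,
          τ p.1 p.2 * τ q.1 q.2 * K22 A W p.1 p.2 q.1 q.2
        = ∑ p : Fin d × Fin d, ∑ q : Fin d × Fin d, τ p.1 p.2 * τ q.1 q.2 *
            ∫ x in cellY d, ∑ m : Fin (d+1) × Fin (d+1), ∑ n : Fin (d+1) × Fin (d+1),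
              aT A x m n * bendStrain W p.1 p.2 x n.1 n.2
                * bendStrain W q.1 q.2 x m.1 m.2 :=
          Finset.sum_congr rfl fun p _ => Finset.sum_congr rfl fun q _ => by rw [hK22c]
      _ = _ := bilin hAc τ (fun p x n => bendStrain W p.1 p.2 x n.1 n.2)
            (fun q x m => bendStrain W q.1 q.2 x m.1 m.2) hcb hcb
  -- collapsed corrector equation
  have hcorr1 : ∀ p q : Fin d × Fin d,
      (∫ x in cellY d, ∑ m : Fin (d+1) × Fin (d+1), ∑ n : Fin (d+1) × Fin (d+1),
        aT A x m n * bendStrain W p.1 p.2 x n.1 n.2 * strain (W q.1 q.2) x m.1 m.2) = 0 := by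
    intro p q
    have h0 := hWcorr p.1 p.2 (W q.1 q.2) (hW q.1 q.2) (hWper q.1 q.2)
    rw [← h0]
    refine setIntegral_congr_fun hmeasY fun x _ => ?_
    rw [collapse2 (f := fun i j => (∑ k : Fin (d+1), ∑ l : Fin (d+1),
      A x i j k l * bendStrain W p.1 p.2 x k l) * strain (W q.1 q.2) x i j)]
    refine Finset.sum_congr rfl fun m _ => ?_
    rw [collapse2 (f := fun k l => A x m.1 m.2 k l * bendStrain W p.1 p.2 x k l),
      Finset.sum_mul]
    exact Finset.sum_congr rfl fun n _ => by unfold aT; ring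
  have hcorr2 : (∫ x in cellY d, ∑ m : Fin (d+1) × Fin (d+1), ∑ n : Fin (d+1) × Fin (d+1),
      aT A x m n * bSf W τ x n * sSf W τ x m) = 0 := by
    have hb := bilin hAc τ (fun p x n => bendStrain W p.1 p.2 x n.1 n.2)
      (fun q x m => strain (W q.1 q.2) x m.1 m.2) hcb hcs
    refine Eq.trans hb.symm ?_
    exact Finset.sum_eq_zero fun p _ => Finset.sum_eq_zero fun q _ => by
      rw [hcorr1, mul_zero]
  -- vanishing cross terms (periodicity)
  have horthstrain : ∀ (p : Fin d × Fin d) (α β : Fin d),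
      (∫ x in cellY d, x (Fin.last d) * strain (W p.1 p.2) x α.castSucc β.castSucc) = 0 := by
    intro p α β
    have hfa := contDiff_comp_proj (hW p.1 p.2) α.castSucc
    have hfb := contDiff_comp_proj (hW p.1 p.2) β.castSucc
    have h1 := orth_xd_pd hfa (hXcomp p α.castSucc) β
    have h2 := orth_xd_pd hfb (hXcomp p β.castSucc) α
    calc (∫ x in cellY d, x (Fin.last d) * strain (W p.1 p.2) x α.castSucc β.castSucc)
        = ∫ x in cellY d,
            (x (Fin.last d) * pd (fun y => W p.1 p.2 y α.castSucc) β.castSucc x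
              + x (Fin.last d) * pd (fun y => W p.1 p.2 y β.castSucc) α.castSucc x) / 2 := by
          refine setIntegral_congr_fun hmeasY fun x _ => ?_
          unfold strain; ring
      _ = ((∫ x in cellY d, x (Fin.last d) * pd (fun y => W p.1 p.2 y α.castSucc) β.castSucc x)
            + ∫ x in cellY d, x (Fin.last d) * pd (fun y => W p.1 p.2 y β.castSucc) α.castSucc x)
            / 2 := by
          rw [MeasureTheory.integral_div, MeasureTheory.integral_add
            (f := fun x => x (Fin.last d) * pd (fun y => W p.1 p.2 y α.castSucc) β.castSucc x)
            (g := fun x => x (Fin.last d) * pd (fun y => W p.1 p.2 y β.castSucc) α.castSucc x)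
            (integrableOn_cellY ((continuous_apply _).mul (pd_continuous hfa _)))
            (integrableOn_cellY ((continuous_apply _).mul (pd_continuous hfb _)))]
      _ = 0 := by rw [h1, h2]; norm_num
  have hcross : ∀ m : Fin (d+1) × Fin (d+1),
      tMat τ m * (∫ x in cellY d, x (Fin.last d) * sSf W τ x m) = 0 := by
    rintro ⟨i, j⟩
    induction i using Fin.lastCases with
    | last => rw [tMat_last₁, zero_mul]
    | cast α =>
      induction j using Fin.lastCases with
      | last => rw [tMat_last₂, zero_mul]
      | cast β =>
        have hz : (∫ x in cellY d,
            x (Fin.last d) * sSf W τ x (α.castSucc, β.castSucc)) = 0 := by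
          calc (∫ x in cellY d, x (Fin.last d) * sSf W τ x (α.castSucc, β.castSucc))
              = ∫ x in cellY d, ∑ p : Fin d × Fin d, τ p.1 p.2 *
                  (x (Fin.last d) * strain (W p.1 p.2) x α.castSucc β.castSucc) := by
                refine setIntegral_congr_fun hmeasY fun x _ => ?_
                unfold sSf
                rw [Finset.mul_sum]
                exact Finset.sum_congr rfl fun p _ => by ring
            _ = ∑ p : Fin d × Fin d, ∫ x in cellY d, τ p.1 p.2 *
                  (x (Fin.last d) * strain (W p.1 p.2) x α.castSucc β.castSucc) :=
                MeasureTheory.integral_finset_sum _ fun p _ => integrableOn_cellY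
                  (continuous_const.mul ((continuous_apply _).mul
                    (strain_continuous (hW p.1 p.2) _ _)))
            _ = 0 := Finset.sum_eq_zero fun p _ => by
                rw [MeasureTheory.integral_const_mul, horthstrain p α β, mul_zero]
        rw [hz, mul_zero]
  -- pointwise expansion of |bS|^2
  have hptlow : ∀ x : Fin (d+1) → ℝ,
      (∑ m : Fin (d+1) × Fin (d+1), (bSf W τ x m)^2)
        = (∑ m : Fin (d+1) × Fin (d+1), (sSf W τ x m)^2)
          - 2 * (∑ m : Fin (d+1) × Fin (d+1),
              tMat τ m * (x (Fin.last d) * sSf W τ x m))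
          + (∑ α : Fin d, ∑ β : Fin d, (τ α β)^2) * (x (Fin.last d))^2 := by
    intro x
    rw [← tMat_sq_sum τ]
    calc (∑ m : Fin (d+1) × Fin (d+1), (bSf W τ x m)^2)
        = ∑ m : Fin (d+1) × Fin (d+1), ((sSf W τ x m)^2
            - 2 * (tMat τ m * (x (Fin.last d) * sSf W τ x m))
            + (tMat τ m)^2 * (x (Fin.last d))^2) :=
          Finset.sum_congr rfl fun m _ => by rw [bSf_eq]; ring
      _ = _ := by
          rw [Finset.sum_add_distrib, Finset.sum_sub_distrib, ← Finset.mul_sum,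
            ← Finset.sum_mul]
  -- integrability bundle
  have hIbsq : IntegrableOn (fun x => ∑ m : Fin (d+1) × Fin (d+1), (bSf W τ x m)^2)
      (cellY d) := integrableOn_cellY (continuous_finset_sum _ fun m _ => (hcbS m).pow 2)
  have hIssq : IntegrableOn (fun x => ∑ m : Fin (d+1) × Fin (d+1), (sSf W τ x m)^2)
      (cellY d) := integrableOn_cellY (continuous_finset_sum _ fun m _ => (hcsS m).pow 2)
  have hIcrs : IntegrableOn (fun x => ∑ m : Fin (d+1) × Fin (d+1),
      tMat τ m * (x (Fin.last d) * sSf W τ x m)) (cellY d) :=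
    integrableOn_cellY (continuous_finset_sum _ fun m _ =>
      continuous_const.mul ((continuous_apply _).mul (hcsS m)))
  have hIbb : IntegrableOn (fun x => ∑ m : Fin (d+1) × Fin (d+1),
      ∑ n : Fin (d+1) × Fin (d+1), aT A x m n * bSf W τ x n * bSf W τ x m) (cellY d) :=
    integrableOn_cellY (continuous_finset_sum _ fun m _ => continuous_finset_sum _ fun n _ =>
      ((hcA m n).mul (hcbS n)).mul (hcbS m))
  have hIbs : IntegrableOn (fun x => ∑ m : Fin (d+1) × Fin (d+1),
      ∑ n : Fin (d+1) × Fin (d+1), aT A x m n * bSf W τ x n * sSf W τ x m) (cellY d) :=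
    integrableOn_cellY (continuous_finset_sum _ fun m _ => continuous_finset_sum _ fun n _ =>
      ((hcA m n).mul (hcbS n)).mul (hcsS m))
  have hIss : IntegrableOn (fun x => ∑ m : Fin (d+1) × Fin (d+1),
      ∑ n : Fin (d+1) × Fin (d+1), aT A x m n * sSf W τ x n * sSf W τ x m) (cellY d) :=
    integrableOn_cellY (continuous_finset_sum _ fun m _ => continuous_finset_sum _ fun n _ =>
      ((hcA m n).mul (hcsS n)).mul (hcsS m))
  have hIxbt : IntegrableOn (fun x => x (Fin.last d) * ∑ m : Fin (d+1) × Fin (d+1),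
      ∑ n : Fin (d+1) × Fin (d+1), aT A x m n * bSf W τ x n * tMat τ m) (cellY d) :=
    integrableOn_cellY ((continuous_apply _).mul (continuous_finset_sum _ fun m _ =>
      continuous_finset_sum _ fun n _ => ((hcA m n).mul (hcbS n)).mul continuous_const))
  have hIxst : IntegrableOn (fun x => x (Fin.last d) * ∑ m : Fin (d+1) × Fin (d+1),
      ∑ n : Fin (d+1) × Fin (d+1), aT A x m n * sSf W τ x n * tMat τ m) (cellY d) :=
    integrableOn_cellY ((continuous_apply _).mul (continuous_finset_sum _ fun m _ =>
      continuous_finset_sum _ fun n _ => ((hcA m n).mul (hcsS n)).mul continuous_const))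
  have hIxts : IntegrableOn (fun x => x (Fin.last d) * ∑ m : Fin (d+1) × Fin (d+1),
      ∑ n : Fin (d+1) × Fin (d+1), aT A x m n * tMat τ n * sSf W τ x m) (cellY d) :=
    integrableOn_cellY ((continuous_apply _).mul (continuous_finset_sum _ fun m _ =>
      continuous_finset_sum _ fun n _ => ((hcA m n).mul continuous_const).mul (hcsS m)))
  have hIx2tt : IntegrableOn (fun x => (x (Fin.last d))^2 * ∑ m : Fin (d+1) × Fin (d+1),
      ∑ n : Fin (d+1) × Fin (d+1), aT A x m n * tMat τ n * tMat τ m) (cellY d) :=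
    integrableOn_cellY (((continuous_apply _).pow 2).mul (continuous_finset_sum _ fun m _ =>
      continuous_finset_sum _ fun n _ => ((hcA m n).mul continuous_const).mul continuous_const))
  -- the L² expansion of the bending strain
  have hmid : (∫ x in cellY d, ∑ m : Fin (d+1) × Fin (d+1),
      tMat τ m * (x (Fin.last d) * sSf W τ x m)) = 0 := by
    rw [MeasureTheory.integral_finset_sum _
      (f := fun m x => tMat τ m * (x (Fin.last d) * sSf W τ x m)) (fun m _ => integrableOn_cellY
      (continuous_const.mul ((continuous_apply _).mul (hcsS m))))]
    exact Finset.sum_eq_zero fun m _ => by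
      rw [MeasureTheory.integral_const_mul]; exact hcross m
  have hIlow : (∫ x in cellY d, ∑ m : Fin (d+1) × Fin (d+1), (bSf W τ x m)^2)
      = (∫ x in cellY d, ∑ m : Fin (d+1) × Fin (d+1), (sSf W τ x m)^2)
        + (∑ α : Fin d, ∑ β : Fin d, (τ α β)^2) / 12 := by
    calc (∫ x in cellY d, ∑ m : Fin (d+1) × Fin (d+1), (bSf W τ x m)^2)
        = ∫ x in cellY d, ((∑ m : Fin (d+1) × Fin (d+1), (sSf W τ x m)^2)
            - 2 * (∑ m : Fin (d+1) × Fin (d+1), tMat τ m * (x (Fin.last d) * sSf W τ x m))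
            + (∑ α : Fin d, ∑ β : Fin d, (τ α β)^2) * (x (Fin.last d))^2) :=
          setIntegral_congr_fun hmeasY fun x _ => hptlow x
      _ = ((∫ x in cellY d, ∑ m : Fin (d+1) × Fin (d+1), (sSf W τ x m)^2)
            - ∫ x in cellY d, 2 * (∑ m : Fin (d+1) × Fin (d+1),
                tMat τ m * (x (Fin.last d) * sSf W τ x m)))
          + ∫ x in cellY d, (∑ α : Fin d, ∑ β : Fin d, (τ α β)^2) * (x (Fin.last d))^2 := by
          have hIc2 : IntegrableOn (fun x => (∑ m : Fin (d+1) × Fin (d+1), (sSf W τ x m)^2)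
              - 2 * (∑ m : Fin (d+1) × Fin (d+1),
                  tMat τ m * (x (Fin.last d) * sSf W τ x m))) (cellY d) :=
            hIssq.sub (hIcrs.const_mul 2)
          have hIT : IntegrableOn (fun x : Fin (d+1) → ℝ =>
              (∑ α : Fin d, ∑ β : Fin d, (τ α β)^2) * (x (Fin.last d))^2) (cellY d) :=
            integrableOn_cellY (continuous_const.mul ((continuous_apply _).pow 2))
          rw [MeasureTheory.integral_add hIc2 hIT,
            MeasureTheory.integral_sub hIssq (hIcrs.const_mul 2)]
      _ = _ := by
          rw [MeasureTheory.integral_const_mul, hmid, MeasureTheory.integral_const_mul,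
            integral_xd_sq d]
          ring
  have hsSnn : 0 ≤ ∫ x in cellY d, ∑ m : Fin (d+1) × Fin (d+1), (sSf W τ x m)^2 :=
    setIntegral_nonneg hmeasY fun x _ => Finset.sum_nonneg fun m _ => sq_nonneg _
  have hTnn : 0 ≤ ∑ α : Fin d, ∑ β : Fin d, (τ α β)^2 :=
    Finset.sum_nonneg fun α _ => Finset.sum_nonneg fun β _ => sq_nonneg _
  constructor
  · -- lower bound
    calc cm / 12 * (∑ α : Fin d, ∑ β : Fin d, (τ α β)^2)
        = cm * ((∑ α : Fin d, ∑ β : Fin d, (τ α β)^2) / 12) := by ring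
      _ ≤ cm * ((∫ x in cellY d, ∑ m : Fin (d+1) × Fin (d+1), (sSf W τ x m)^2)
            + (∑ α : Fin d, ∑ β : Fin d, (τ α β)^2) / 12) := by
          have := hsSnn; nlinarith
      _ = cm * ∫ x in cellY d, ∑ m : Fin (d+1) × Fin (d+1), (bSf W τ x m)^2 := by
          rw [hIlow]
      _ = ∫ x in cellY d, cm * ∑ m : Fin (d+1) × Fin (d+1), (bSf W τ x m)^2 :=
          (MeasureTheory.integral_const_mul _ _).symm
      _ ≤ ∫ x in cellY d, ∑ m : Fin (d+1) × Fin (d+1), ∑ n : Fin (d+1) × Fin (d+1),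
            aT A x m n * bSf W τ x n * bSf W τ x m := by
          refine setIntegral_mono_on (hIbsq.const_mul cm) hIbb hmeasY fun x _ => ?_
          exact hellpt x (bSf W τ x) (hbSsym x)
      _ = _ := hQ.symm
  · -- upper bound
    have hsplit_m : ∀ (u : Fin (d+1) × Fin (d+1) → ℝ) (x : Fin (d+1) → ℝ),
        (∑ m : Fin (d+1) × Fin (d+1), ∑ n : Fin (d+1) × Fin (d+1),
            aT A x m n * u n * bSf W τ x m)
          = (∑ m : Fin (d+1) × Fin (d+1), ∑ n : Fin (d+1) × Fin (d+1),
              aT A x m n * u n * sSf W τ x m)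
            - x (Fin.last d) * (∑ m : Fin (d+1) × Fin (d+1), ∑ n : Fin (d+1) × Fin (d+1),
              aT A x m n * u n * tMat τ m) := by
      intro u x
      rw [Finset.mul_sum, ← Finset.sum_sub_distrib]
      refine Finset.sum_congr rfl fun m _ => ?_
      rw [Finset.mul_sum, ← Finset.sum_sub_distrib]
      refine Finset.sum_congr rfl fun n _ => ?_
      rw [bSf_eq]; ring
    have hsplit_n : ∀ (v : (Fin (d+1) → ℝ) → Fin (d+1) × Fin (d+1) → ℝ)
        (x : Fin (d+1) → ℝ),
        (∑ m : Fin (d+1) × Fin (d+1), ∑ n : Fin (d+1) × Fin (d+1),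
            aT A x m n * bSf W τ x n * v x m)
          = (∑ m : Fin (d+1) × Fin (d+1), ∑ n : Fin (d+1) × Fin (d+1),
              aT A x m n * sSf W τ x n * v x m)
            - x (Fin.last d) * (∑ m : Fin (d+1) × Fin (d+1), ∑ n : Fin (d+1) × Fin (d+1),
              aT A x m n * tMat τ n * v x m) := by
      intro v x
      rw [Finset.mul_sum, ← Finset.sum_sub_distrib]
      refine Finset.sum_congr rfl fun m _ => ?_
      rw [Finset.mul_sum, ← Finset.sum_sub_distrib]
      refine Finset.sum_congr rfl fun n _ => ?_
      rw [bSf_eq]; ring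
    have hswap : ∀ x : Fin (d+1) → ℝ,
        (∑ m : Fin (d+1) × Fin (d+1), ∑ n : Fin (d+1) × Fin (d+1),
            aT A x m n * sSf W τ x n * tMat τ m)
          = ∑ m : Fin (d+1) × Fin (d+1), ∑ n : Fin (d+1) × Fin (d+1),
            aT A x m n * tMat τ n * sSf W τ x m := by
      intro x
      rw [Finset.sum_comm]
      refine Finset.sum_congr rfl fun y _ => Finset.sum_congr rfl fun z _ => ?_
      have hA := (hAsym x z.1 z.2 y.1 y.2).2.2
      unfold aT
      rw [hA]; ring
    -- Q = ∫ x_d² aT tM tM − ∫ aT sS sS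
    have hQ2 : (∑ α : Fin d, ∑ β : Fin d, ∑ γ : Fin d, ∑ δ : Fin d,
          τ α β * τ γ δ * K22 A W α β γ δ)
        = (∫ x in cellY d, (x (Fin.last d))^2 * ∑ m : Fin (d+1) × Fin (d+1),
              ∑ n : Fin (d+1) × Fin (d+1), aT A x m n * tMat τ n * tMat τ m)
          - ∫ x in cellY d, ∑ m : Fin (d+1) × Fin (d+1), ∑ n : Fin (d+1) × Fin (d+1),
              aT A x m n * sSf W τ x n * sSf W τ x m := by
      have hJ : (∫ x in cellY d, x (Fin.last d) * ∑ m : Fin (d+1) × Fin (d+1),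
            ∑ n : Fin (d+1) × Fin (d+1), aT A x m n * bSf W τ x n * tMat τ m)
          = (∫ x in cellY d, x (Fin.last d) * ∑ m : Fin (d+1) × Fin (d+1),
              ∑ n : Fin (d+1) × Fin (d+1), aT A x m n * sSf W τ x n * tMat τ m)
            - ∫ x in cellY d, (x (Fin.last d))^2 * ∑ m : Fin (d+1) × Fin (d+1),
              ∑ n : Fin (d+1) × Fin (d+1), aT A x m n * tMat τ n * tMat τ m := by
        rw [← MeasureTheory.integral_sub hIxst hIx2tt]
        refine setIntegral_congr_fun hmeasY fun x _ => ?_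
        rw [hsplit_n (fun _ m => tMat τ m) x]
        ring
      have hJ5 : (∫ x in cellY d, x (Fin.last d) * ∑ m : Fin (d+1) × Fin (d+1),
            ∑ n : Fin (d+1) × Fin (d+1), aT A x m n * tMat τ n * sSf W τ x m)
          = ∫ x in cellY d, ∑ m : Fin (d+1) × Fin (d+1), ∑ n : Fin (d+1) × Fin (d+1),
              aT A x m n * sSf W τ x n * sSf W τ x m := by
        have h0 : (0:ℝ) = (∫ x in cellY d, ∑ m : Fin (d+1) × Fin (d+1),
              ∑ n : Fin (d+1) × Fin (d+1), aT A x m n * sSf W τ x n * sSf W τ x m)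
            - ∫ x in cellY d, x (Fin.last d) * ∑ m : Fin (d+1) × Fin (d+1),
              ∑ n : Fin (d+1) × Fin (d+1), aT A x m n * tMat τ n * sSf W τ x m := by
          rw [← hcorr2, ← MeasureTheory.integral_sub hIss hIxts]
          refine setIntegral_congr_fun hmeasY fun x _ => ?_
          rw [hsplit_n (fun x m => sSf W τ x m) x]
        linarith
      have hQ3 : (∑ α : Fin d, ∑ β : Fin d, ∑ γ : Fin d, ∑ δ : Fin d,
            τ α β * τ γ δ * K22 A W α β γ δ)
          = - ∫ x in cellY d, x (Fin.last d) * ∑ m : Fin (d+1) × Fin (d+1),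
              ∑ n : Fin (d+1) × Fin (d+1), aT A x m n * bSf W τ x n * tMat τ m := by
        rw [hQ]
        have : (∫ x in cellY d, ∑ m : Fin (d+1) × Fin (d+1), ∑ n : Fin (d+1) × Fin (d+1),
              aT A x m n * bSf W τ x n * bSf W τ x m)
            = (∫ x in cellY d, ∑ m : Fin (d+1) × Fin (d+1), ∑ n : Fin (d+1) × Fin (d+1),
                aT A x m n * bSf W τ x n * sSf W τ x m)
              - ∫ x in cellY d, x (Fin.last d) * ∑ m : Fin (d+1) × Fin (d+1),
                ∑ n : Fin (d+1) × Fin (d+1), aT A x m n * bSf W τ x n * tMat τ m := by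
          rw [← MeasureTheory.integral_sub hIbs hIxbt]
          refine setIntegral_congr_fun hmeasY fun x _ => ?_
          rw [hsplit_m (bSf W τ x) x]
        rw [this, hcorr2, zero_sub]
      have hswapint : (∫ x in cellY d, x (Fin.last d) * ∑ m : Fin (d+1) × Fin (d+1),
            ∑ n : Fin (d+1) × Fin (d+1), aT A x m n * sSf W τ x n * tMat τ m)
          = ∫ x in cellY d, x (Fin.last d) * ∑ m : Fin (d+1) × Fin (d+1),
            ∑ n : Fin (d+1) × Fin (d+1), aT A x m n * tMat τ n * sSf W τ x m :=
        setIntegral_congr_fun hmeasY fun x _ => by rw [hswap x]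
      rw [hQ3, hJ, hswapint, hJ5]
      ring
    -- conclude
    have hJ4 : (∫ x in cellY d, (x (Fin.last d))^2 * ∑ m : Fin (d+1) × Fin (d+1),
          ∑ n : Fin (d+1) × Fin (d+1), aT A x m n * tMat τ n * tMat τ m)
        ≤ cp * (∑ α : Fin d, ∑ β : Fin d, (τ α β)^2) / 12 := by
      calc (∫ x in cellY d, (x (Fin.last d))^2 * ∑ m : Fin (d+1) × Fin (d+1),
            ∑ n : Fin (d+1) × Fin (d+1), aT A x m n * tMat τ n * tMat τ m)
          ≤ ∫ x in cellY d, (cp * (∑ α : Fin d, ∑ β : Fin d, (τ α β)^2))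
              * (x (Fin.last d))^2 := by
            refine setIntegral_mono_on hIx2tt
              (integrableOn_cellY (continuous_const.mul ((continuous_apply _).pow 2)))
              hmeasY fun x _ => ?_
            have h1 := hbdpt x
            rw [tMat_sq_sum τ] at h1
            nlinarith [sq_nonneg (x (Fin.last d))]
        _ = cp * (∑ α : Fin d, ∑ β : Fin d, (τ α β)^2) / 12 := by
            rw [MeasureTheory.integral_const_mul, integral_xd_sq d]
            ring
    have hIssnn : 0 ≤ ∫ x in cellY d, ∑ m : Fin (d+1) × Fin (d+1),
        ∑ n : Fin (d+1) × Fin (d+1), aT A x m n * sSf W τ x n * sSf W τ x m := by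
      refine setIntegral_nonneg hmeasY fun x _ => ?_
      have h1 := hellpt x (sSf W τ x) (hsSsym x)
      have h2 : 0 ≤ cm * ∑ m : Fin (d+1) × Fin (d+1), (sSf W τ x m)^2 :=
        mul_nonneg hcm.le (Finset.sum_nonneg fun m _ => sq_nonneg _)
      linarith
    rw [hQ2]
    have hfin : cp * (∑ α : Fin d, ∑ β : Fin d, (τ α β)^2) / 12
        ≤ cp * (cp / cm + 1) * (∑ α : Fin d, ∑ β : Fin d, (τ α β)^2) := by
      have hdnn : 0 ≤ cp / cm := div_nonneg hcp.le hcm.le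
      nlinarith [mul_nonneg (mul_nonneg hcp.le hTnn) hdnn, mul_nonneg hcp.le hTnn]
    linarith
end
end
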